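/- arXiv:1406.7846 — 7 statements merged into one kernel-verified Lean document; each statement's English description precedes it below -/
import Mathlib

section
/- For every measurable function u : [0,1]^2 → ℝ in L^∞, the jumble norm satisfies ‖u‖_□ ≤ ‖u‖_⊞ ≤ ‖u‖_□^{1/2} ‖u‖_∞^{1/2}, where ‖u‖_□ = sup_{S,T} |∫_{S×T} u| is the cut norm. -/
open MeasureTheory Set

/-- The jumble norm of `u : [0,1]² → ℝ`. -/
noncomputable def jumbleNorm (u : ℝ × ℝ → ℝ) : ℝ :=
  sSup {r : ℝ | ∃ S T : Set ℝ, MeasurableSet S ∧ MeasurableSet T ∧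
    S ⊆ Icc 0 1 ∧ T ⊆ Icc 0 1 ∧ 0 < (volume S).toReal ∧ 0 < (volume T).toReal ∧
    r = |∫ p in S ×ˢ T, u p| / Real.sqrt ((volume S).toReal * (volume T).toReal)}

/-- The cut norm of `u : [0,1]² → ℝ`. -/
noncomputable def cutNorm (u : ℝ × ℝ → ℝ) : ℝ :=
  sSup {r : ℝ | ∃ S T : Set ℝ, MeasurableSet S ∧ MeasurableSet T ∧
    S ⊆ Icc 0 1 ∧ T ⊆ Icc 0 1 ∧ r = |∫ p in S ×ˢ T, u p|}

/-- The `L^∞` norm of a function on `[0,1]²`. -/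
noncomputable def lInfNorm2 (u : ℝ × ℝ → ℝ) : ℝ :=
  (eLpNorm u ⊤ (volume.restrict (Icc 0 1 ×ˢ Icc 0 1))).toReal

section Aux

variable (u : ℝ × ℝ → ℝ)

lemma volProd_toReal (S T : Set ℝ) :
    (volume (S ×ˢ T)).toReal = (volume S).toReal * (volume T).toReal := by
  rw [Measure.volume_eq_prod, Measure.prod_prod, ENNReal.toReal_mul]

lemma vol_le_one {S : Set ℝ} (hS : S ⊆ Icc 0 1) : (volume S).toReal ≤ 1 := by
  have h1 : volume S ≤ volume (Icc (0:ℝ) 1) := measure_mono hS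
  have h2 : volume (Icc (0:ℝ) 1) = 1 := by
    rw [Real.volume_Icc]; norm_num
  calc (volume S).toReal ≤ (volume (Icc (0:ℝ) 1)).toReal :=
        ENNReal.toReal_mono (by rw [h2]; exact ENNReal.one_ne_top) h1
    _ = 1 := by rw [h2]; simp

lemma vol_lt_top {S : Set ℝ} (hS : S ⊆ Icc 0 1) : volume S < ⊤ := by
  have h1 : volume S ≤ volume (Icc (0:ℝ) 1) := measure_mono hS
  have h2 : volume (Icc (0:ℝ) 1) = 1 := by rw [Real.volume_Icc]; norm_num
  exact lt_of_le_of_lt (h2 ▸ h1) ENNReal.one_lt_top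

lemma key_bound (hu : MemLp u ⊤ (volume.restrict (Icc 0 1 ×ˢ Icc 0 1)))
    {S T : Set ℝ} (hS : S ⊆ Icc 0 1) (hT : T ⊆ Icc 0 1) :
    |∫ p in S ×ˢ T, u p| ≤ lInfNorm2 u * ((volume S).toReal * (volume T).toReal) := by
  have hsub : S ×ˢ T ⊆ Icc (0:ℝ) 1 ×ˢ Icc (0:ℝ) 1 := prod_mono hS hT
  have hfin : volume (S ×ˢ T) < ⊤ := by
    rw [Measure.volume_eq_prod, Measure.prod_prod]
    exact ENNReal.mul_lt_top (vol_lt_top hS) (vol_lt_top hT)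
  have htop : eLpNormEssSup u (volume.restrict (Icc 0 1 ×ˢ Icc 0 1)) ≠ ⊤ := by
    have := hu.2
    rwa [eLpNorm_exponent_top, lt_top_iff_ne_top] at this
  have hae : ∀ᵐ x ∂(volume.restrict (Icc 0 1 ×ˢ Icc 0 1 : Set (ℝ×ℝ))), ‖u x‖ ≤ lInfNorm2 u := by
    filter_upwards [ae_le_eLpNormEssSup (f := u)
      (μ := volume.restrict (Icc 0 1 ×ˢ Icc 0 1))] with x hx
    have : ((‖u x‖₊ : ENNReal)).toReal ≤
        (eLpNormEssSup u (volume.restrict (Icc 0 1 ×ˢ Icc 0 1))).toReal :=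
      ENNReal.toReal_mono htop hx
    simpa [lInfNorm2, eLpNorm_exponent_top] using this
  have hae' := ae_restrict_of_ae_restrict_of_subset hsub hae
  have := norm_setIntegral_le_of_norm_le_const_ae hfin hae'
  rw [Real.norm_eq_abs] at this
  calc |∫ p in S ×ˢ T, u p| ≤ lInfNorm2 u * (volume (S ×ˢ T)).toReal := this
    _ = lInfNorm2 u * ((volume S).toReal * (volume T).toReal) := by rw [volProd_toReal]

lemma lInf_nonneg : 0 ≤ lInfNorm2 u := ENNReal.toReal_nonneg

lemma bddAbove_cut (hu : MemLp u ⊤ (volume.restrict (Icc 0 1 ×ˢ Icc 0 1))) :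
    BddAbove {r : ℝ | ∃ S T : Set ℝ, MeasurableSet S ∧ MeasurableSet T ∧
      S ⊆ Icc 0 1 ∧ T ⊆ Icc 0 1 ∧ r = |∫ p in S ×ˢ T, u p|} := by
  refine ⟨lInfNorm2 u, ?_⟩
  rintro r ⟨S, T, _, _, hS, hT, rfl⟩
  calc |∫ p in S ×ˢ T, u p| ≤ lInfNorm2 u * ((volume S).toReal * (volume T).toReal) :=
        key_bound u hu hS hT
    _ ≤ lInfNorm2 u * (1 * 1) := by
        apply mul_le_mul_of_nonneg_left _ (lInf_nonneg u)
        exact mul_le_mul (vol_le_one hS) (vol_le_one hT) ENNReal.toReal_nonneg zero_le_one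
    _ = lInfNorm2 u := by ring

lemma bddAbove_jumble (hu : MemLp u ⊤ (volume.restrict (Icc 0 1 ×ˢ Icc 0 1))) :
    BddAbove {r : ℝ | ∃ S T : Set ℝ, MeasurableSet S ∧ MeasurableSet T ∧
      S ⊆ Icc 0 1 ∧ T ⊆ Icc 0 1 ∧ 0 < (volume S).toReal ∧ 0 < (volume T).toReal ∧
      r = |∫ p in S ×ˢ T, u p| / Real.sqrt ((volume S).toReal * (volume T).toReal)} := by
  refine ⟨lInfNorm2 u, ?_⟩
  rintro r ⟨S, T, _, _, hS, hT, haS, haT, rfl⟩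
  set a := (volume S).toReal
  set b := (volume T).toReal
  have hab : 0 < a * b := mul_pos haS haT
  have hs : 0 < Real.sqrt (a * b) := Real.sqrt_pos.mpr hab
  rw [div_le_iff₀ hs]
  calc |∫ p in S ×ˢ T, u p| ≤ lInfNorm2 u * (a * b) := key_bound u hu hS hT
    _ = lInfNorm2 u * (Real.sqrt (a*b) * Real.sqrt (a*b)) := by
        rw [Real.mul_self_sqrt hab.le]
    _ = (lInfNorm2 u * Real.sqrt (a*b)) * Real.sqrt (a*b) := by ring
    _ ≤ (lInfNorm2 u * 1) * Real.sqrt (a*b) := by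
        apply mul_le_mul_of_nonneg_right _ hs.le
        apply mul_le_mul_of_nonneg_left _ (lInf_nonneg u)
        rw [show (1:ℝ) = Real.sqrt 1 from (Real.sqrt_one).symm]
        apply Real.sqrt_le_sqrt
        have := mul_le_mul (vol_le_one hS) (vol_le_one hT) ENNReal.toReal_nonneg zero_le_one
        linarith
    _ = lInfNorm2 u * Real.sqrt (a*b) := by ring

lemma jumble_mem_top :
    |∫ p in (Icc (0:ℝ) 1) ×ˢ (Icc (0:ℝ) 1), u p| /
      Real.sqrt ((volume (Icc (0:ℝ) 1)).toReal * (volume (Icc (0:ℝ) 1)).toReal) ∈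
    {r : ℝ | ∃ S T : Set ℝ, MeasurableSet S ∧ MeasurableSet T ∧
      S ⊆ Icc 0 1 ∧ T ⊆ Icc 0 1 ∧ 0 < (volume S).toReal ∧ 0 < (volume T).toReal ∧
      r = |∫ p in S ×ˢ T, u p| / Real.sqrt ((volume S).toReal * (volume T).toReal)} := by
  refine ⟨Icc 0 1, Icc 0 1, measurableSet_Icc, measurableSet_Icc,
    subset_rfl, subset_rfl, ?_, ?_, rfl⟩ <;>
  · rw [Real.volume_Icc]; norm_num

lemma jumble_nonneg (hu : MemLp u ⊤ (volume.restrict (Icc 0 1 ×ˢ Icc 0 1))) :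
    0 ≤ jumbleNorm u := by
  refine le_trans ?_ (le_csSup (bddAbove_jumble u hu) (jumble_mem_top u))
  positivity

end Aux

theorem cut_le_jumble_le (u : ℝ × ℝ → ℝ)
    (hu : MemLp u ⊤ (volume.restrict (Icc 0 1 ×ˢ Icc 0 1))) :
    cutNorm u ≤ jumbleNorm u ∧
      jumbleNorm u ≤ Real.sqrt (cutNorm u) * Real.sqrt (lInfNorm2 u) := by
  have hcut_bdd := bddAbove_cut u hu
  have hjum_bdd := bddAbove_jumble u hu
  have hcut_ne : {r : ℝ | ∃ S T : Set ℝ, MeasurableSet S ∧ MeasurableSet T ∧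
      S ⊆ Icc 0 1 ∧ T ⊆ Icc 0 1 ∧ r = |∫ p in S ×ˢ T, u p|}.Nonempty :=
    ⟨_, ∅, ∅, MeasurableSet.empty, MeasurableSet.empty, empty_subset _, empty_subset _, rfl⟩
  have hjum_ne : Set.Nonempty _ := ⟨_, jumble_mem_top u⟩
  constructor
  · -- cutNorm ≤ jumbleNorm
    apply csSup_le hcut_ne
    rintro r ⟨S, T, hmS, hmT, hS, hT, rfl⟩
    by_cases haS : 0 < (volume S).toReal
    · by_cases haT : 0 < (volume T).toReal
      · have hab : 0 < (volume S).toReal * (volume T).toReal := mul_pos haS haT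
        have hs : 0 < Real.sqrt ((volume S).toReal * (volume T).toReal) :=
          Real.sqrt_pos.mpr hab
        have hle1 : Real.sqrt ((volume S).toReal * (volume T).toReal) ≤ 1 := by
          rw [show (1:ℝ) = Real.sqrt 1 from (Real.sqrt_one).symm]
          apply Real.sqrt_le_sqrt
          have := mul_le_mul (vol_le_one hS) (vol_le_one hT) ENNReal.toReal_nonneg zero_le_one
          linarith
        have : |∫ p in S ×ˢ T, u p| ≤
            |∫ p in S ×ˢ T, u p| / Real.sqrt ((volume S).toReal * (volume T).toReal) := by
          rw [le_div_iff₀ hs]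
          exact mul_le_of_le_one_right (abs_nonneg _) hle1
        exact this.trans (le_csSup hjum_bdd ⟨S, T, hmS, hmT, hS, hT, haS, haT, rfl⟩)
      · have hT0 : (volume T) = 0 := by
          have := (vol_lt_top hT).ne
          simpa [ENNReal.toReal_pos_iff, lt_top_iff_ne_top, this] using haT
        have : volume (S ×ˢ T) = 0 := by
          rw [Measure.volume_eq_prod, Measure.prod_prod, hT0, mul_zero]
        rw [Measure.restrict_eq_zero.mpr this, integral_zero_measure, abs_zero]
        exact jumble_nonneg u hu
    · have hS0 : (volume S) = 0 := by
        have := (vol_lt_top hS).ne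
        simpa [ENNReal.toReal_pos_iff, lt_top_iff_ne_top, this] using haS
      have : volume (S ×ˢ T) = 0 := by
        rw [Measure.volume_eq_prod, Measure.prod_prod, hS0, zero_mul]
      rw [Measure.restrict_eq_zero.mpr this, integral_zero_measure, abs_zero]
      exact jumble_nonneg u hu
  · -- jumbleNorm ≤ √cutNorm √lInf
    apply csSup_le hjum_ne
    rintro r ⟨S, T, hmS, hmT, hS, hT, haS, haT, rfl⟩
    set a := (volume S).toReal
    set b := (volume T).toReal
    set I := |∫ p in S ×ˢ T, u p| with hI
    have hInn : 0 ≤ I := abs_nonneg _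
    have hab : 0 < a * b := mul_pos haS haT
    have hs : 0 < Real.sqrt (a * b) := Real.sqrt_pos.mpr hab
    have hIcut : I ≤ cutNorm u := le_csSup hcut_bdd ⟨S, T, hmS, hmT, hS, hT, rfl⟩
    have hIM : I ≤ lInfNorm2 u * (a * b) := key_bound u hu hS hT
    have h1 : Real.sqrt I ≤ Real.sqrt (cutNorm u) := Real.sqrt_le_sqrt hIcut
    have h2 : Real.sqrt I / Real.sqrt (a*b) ≤ Real.sqrt (lInfNorm2 u) := by
      rw [div_le_iff₀ hs]
      calc Real.sqrt I ≤ Real.sqrt (lInfNorm2 u * (a * b)) := Real.sqrt_le_sqrt hIM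
        _ = Real.sqrt (lInfNorm2 u) * Real.sqrt (a * b) := Real.sqrt_mul (lInf_nonneg u) _
    calc I / Real.sqrt (a * b) = Real.sqrt I * (Real.sqrt I / Real.sqrt (a*b)) := by
          rw [mul_div_assoc', Real.mul_self_sqrt hInn]
      _ ≤ Real.sqrt (cutNorm u) * Real.sqrt (lInfNorm2 u) :=
          mul_le_mul h1 h2 (by positivity) (Real.sqrt_nonneg _)
end

section
/- Let P = {S_1,…,S_k} be a measurable partition of [0,1] and let u : [0,1]^2 → ℝ be a stepfunction with steps in P×P (constant on each S_i × S_j). Then there exist index sets A, B ⊆ [k] such that, with T_1 = ⋃_{i∈A} S_i and T_2 = ⋃_{j∈B} S_j, the jumble norm of u equals (λ(T_1)λ(T_2))^{-1/2} |∫_{T_1×T_2} u|. -/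
open MeasureTheory Set

lemma qcore (a b t m s : ℝ) (ht0 : 0 ≤ t) (htm : t ≤ m) (hs : 0 ≤ s) (hb : s = 0 → b = 0) :
    (a*t+b)^2 / (t+s) ≤ max (b^2 / s) ((a*m+b)^2 / (m+s)) := by
  rcases eq_or_lt_of_le hs with hs0 | hs
  · -- s = 0, b = 0
    have hb0 : b = 0 := hb hs0.symm
    subst hb0
    rcases eq_or_lt_of_le ht0 with ht | ht
    · refine le_max_of_le_right ?_
      have hz : (a*t+0)^2/(t+s) = 0 := by rw [← ht, ← hs0]; simp
      rw [hz]
      exact div_nonneg (sq_nonneg _) (by linarith)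
    · have hm : 0 < m := lt_of_lt_of_le ht htm
      have h1 : (a*t+0)^2/(t+s) = a^2*t := by
        rw [← hs0]; field_simp; ring
      have h2 : (a*m+0)^2/(m+s) = a^2*m := by
        rw [← hs0]; field_simp; ring
      rw [h1, h2]
      refine le_max_of_le_right ?_
      nlinarith [sq_nonneg a]
  · rcases eq_or_lt_of_le (ht0.trans htm) with hm | hm
    · -- m = 0 hence t = 0
      have ht : t = 0 := le_antisymm (hm ▸ htm) ht0
      subst ht; rw [← hm]
      refine le_max_of_le_right le_rfl
    · -- main case: s > 0, m > 0
      have hts : 0 < t + s := by linarith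
      have hms : 0 < m + s := by linarith
      set M := max (b^2 / s) ((a*m+b)^2 / (m+s)) with hM
      have h1 : b^2 ≤ M*s := by
        rw [← div_le_iff₀ hs]; exact le_max_left _ _
      have h2 : (a*m+b)^2 ≤ M*(m+s) := by
        rw [← div_le_iff₀ hms]; exact le_max_right _ _
      have key : ((m-t)*b^2*(m+s) + t*(a*m+b)^2*s) * (t+s) - (a*t+b)^2*(m*s*(m+s))
          = m*t*(m-t)*(b-a*s)^2 := by ring
      have hnn : 0 ≤ m*t*(m-t)*(b-a*s)^2 := by
        have : 0 ≤ m - t := by linarith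
        positivity
      have c1 : (m-t)*b^2*(m+s)*(t+s) ≤ (m-t)*(M*s)*(m+s)*(t+s) := by
        have hnn2 : 0 ≤ (m-t)*(m+s)*(t+s) := by
          have : 0 ≤ m - t := by linarith
          positivity
        nlinarith [hnn2, h1]
      have c2 : t*(a*m+b)^2*s*(t+s) ≤ t*(M*(m+s))*s*(t+s) := by
        have hnn2 : 0 ≤ t*s*(t+s) := by positivity
        nlinarith [h2]
      have main : (a*t+b)^2*(m*s*(m+s)) ≤ M*(t+s)*(m*s*(m+s)) := by nlinarith [key, hnn, c1, c2]
      rw [div_le_iff₀ hts]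
      have hpos : 0 < m*s*(m+s) := by positivity
      calc (a*t+b)^2 ≤ M*(t+s) := le_of_mul_le_mul_right (by linarith [main]) hpos
        _ = M*(t+s) := rfl

lemma div_le_div_of_nonneg' {u v d : ℝ} (h : u ≤ v) (hd : 0 ≤ d) : u / d ≤ v / d := by
  rcases eq_or_lt_of_le hd with h0 | h0
  · simp [← h0]
  · exact (div_le_div_iff_of_pos_right h0).2 h

lemma score (a b t m s : ℝ) (ht0 : 0 ≤ t) (htm : t ≤ m) (hs : 0 ≤ s) (hb : s = 0 → b = 0) :
    |a*t+b| / Real.sqrt (t+s) ≤ max (|b| / Real.sqrt s) (|a*m+b| / Real.sqrt (m+s)) := by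
  have e : ∀ X d : ℝ, |X| / Real.sqrt d = Real.sqrt (X^2 / d) := by
    intro X d
    rw [Real.sqrt_div (sq_nonneg X), Real.sqrt_sq_eq_abs]
  rw [e, e, e]
  have h := qcore a b t m s ht0 htm hs hb
  rcases le_max_iff.1 h with h' | h'
  · exact le_max_of_le_left (Real.sqrt_le_sqrt h')
  · exact le_max_of_le_right (Real.sqrt_le_sqrt h')

lemma vec {k : ℕ} (a m : Fin k → ℝ) (s : Finset (Fin k)) :
    ∀ (x : Fin k → ℝ), (∀ i, 0 ≤ x i) → (∀ i, x i ≤ m i) →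
    (∀ i ∉ s, x i = 0 ∨ x i = m i) →
    ∃ A : Finset (Fin k),
      |∑ i, a i * x i| / Real.sqrt (∑ i, x i) ≤
      |∑ i ∈ A, a i * m i| / Real.sqrt (∑ i ∈ A, m i) := by
  induction s using Finset.induction_on with
  | empty =>
    intro x hx0 hxm hext
    refine ⟨Finset.univ.filter (fun i => x i ≠ 0), le_of_eq ?_⟩
    have hxm' : ∀ i ∈ Finset.univ.filter (fun i => x i ≠ 0), x i = m i := by
      intro i hi
      rcases hext i (Finset.notMem_empty i) with h | h
      · exact absurd h (Finset.mem_filter.1 hi).2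
      · exact h
    have h1 : ∑ i ∈ Finset.univ.filter (fun i => x i ≠ 0), a i * m i = ∑ i, a i * x i := by
      rw [Finset.sum_congr rfl (fun i hi => by rw [← hxm' i hi] :
        ∀ i ∈ Finset.univ.filter (fun i => x i ≠ 0), a i * m i = a i * x i)]
      exact Finset.sum_filter_of_ne (fun i _ h hx => h (by rw [hx, mul_zero]))
    have h2 : ∑ i ∈ Finset.univ.filter (fun i => x i ≠ 0), m i = ∑ i, x i := by
      rw [Finset.sum_congr rfl (fun i hi => (hxm' i hi).symm :
        ∀ i ∈ Finset.univ.filter (fun i => x i ≠ 0), m i = x i)]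
      exact Finset.sum_filter_of_ne (fun i _ h => h)
    rw [h1, h2]
  | @insert j s hjs ih =>
    intro x hx0 hxm hext
    have hmj0 : 0 ≤ m j := (hx0 j).trans (hxm j)
    set x0 := Function.update x j 0 with hx0def
    set x1 := Function.update x j (m j) with hx1def
    have hx0ne : ∀ i, i ≠ j → x0 i = x i := fun i hij => Function.update_of_ne hij _ _
    have hx1ne : ∀ i, i ≠ j → x1 i = x i := fun i hij => Function.update_of_ne hij _ _
    have hx0j : x0 j = 0 := Function.update_self _ _ _
    have hx1j : x1 j = m j := Function.update_self _ _ _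
    obtain ⟨A0, hA0⟩ := ih x0
      (by intro i; rcases eq_or_ne i j with rfl | hij
          · rw [hx0j]
          · rw [hx0ne i hij]; exact hx0 i)
      (by intro i; rcases eq_or_ne i j with rfl | hij
          · rw [hx0j]; exact hmj0
          · rw [hx0ne i hij]; exact hxm i)
      (by intro i hi; rcases eq_or_ne i j with rfl | hij
          · left; exact hx0j
          · rw [hx0ne i hij]; exact hext i (by simp [hij, hi]))
    obtain ⟨A1, hA1⟩ := ih x1
      (by intro i; rcases eq_or_ne i j with rfl | hij
          · rw [hx1j]; exact hmj0
          · rw [hx1ne i hij]; exact hx0 i)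
      (by intro i; rcases eq_or_ne i j with rfl | hij
          · rw [hx1j]
          · rw [hx1ne i hij]; exact hxm i)
      (by intro i hi; rcases eq_or_ne i j with rfl | hij
          · right; exact hx1j
          · rw [hx1ne i hij]; exact hext i (by simp [hij, hi]))
    set b := ∑ i ∈ Finset.univ.erase j, a i * x i with hbdef
    set sr := ∑ i ∈ Finset.univ.erase j, x i with hsdef
    have hsum : ∑ i, a i * x i = a j * x j + b := by
      rw [hbdef, ← Finset.sum_erase_add Finset.univ _ (Finset.mem_univ j)]; ring
    have hsum' : ∑ i, x i = x j + sr := by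
      rw [hsdef, ← Finset.sum_erase_add Finset.univ _ (Finset.mem_univ j)]; ring
    have erase_congr : ∀ (f : Fin k → ℝ) (g : Fin k → ℝ), (∀ i, i ≠ j → f i = g i) →
        ∑ i ∈ Finset.univ.erase j, f i = ∑ i ∈ Finset.univ.erase j, g i :=
      fun f g h => Finset.sum_congr rfl (fun i hi => h i (Finset.ne_of_mem_erase hi))
    have hb0 : ∑ i, a i * x0 i = b := by
      rw [← Finset.sum_erase_add Finset.univ _ (Finset.mem_univ j), hx0j, mul_zero, add_zero,
        hbdef]
      exact erase_congr _ _ (fun i hij => by rw [hx0ne i hij])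
    have hs0 : ∑ i, x0 i = sr := by
      rw [← Finset.sum_erase_add Finset.univ _ (Finset.mem_univ j), hx0j, add_zero, hsdef]
      exact erase_congr _ _ (fun i hij => by rw [hx0ne i hij])
    have hb1 : ∑ i, a i * x1 i = a j * m j + b := by
      rw [← Finset.sum_erase_add Finset.univ _ (Finset.mem_univ j), hx1j, hbdef, add_comm]
      congr 1
      exact erase_congr _ _ (fun i hij => by rw [hx1ne i hij])
    have hs1 : ∑ i, x1 i = m j + sr := by
      rw [← Finset.sum_erase_add Finset.univ _ (Finset.mem_univ j), hx1j, hsdef, add_comm]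
      congr 1
      exact erase_congr _ _ (fun i hij => by rw [hx1ne i hij])
    have hsr : 0 ≤ sr := Finset.sum_nonneg fun i _ => hx0 i
    have hbz : sr = 0 → b = 0 := by
      intro h
      have hz : ∀ i ∈ Finset.univ.erase j, x i = 0 :=
        (Finset.sum_eq_zero_iff_of_nonneg (fun i _ => hx0 i)).1 h
      exact Finset.sum_eq_zero fun i hi => by rw [hz i hi, mul_zero]
    have hcore : |∑ i, a i * x i| / Real.sqrt (∑ i, x i) ≤
        max (|∑ i, a i * x0 i| / Real.sqrt (∑ i, x0 i))
            (|∑ i, a i * x1 i| / Real.sqrt (∑ i, x1 i)) := by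
      rw [hsum, hsum', hb0, hs0, hb1, hs1]
      exact score (a j) b (x j) (m j) sr (hx0 j) (hxm j) hsr hbz
    rcases le_max_iff.1 hcore with h' | h'
    · exact ⟨A0, h'.trans hA0⟩
    · exact ⟨A1, h'.trans hA1⟩

lemma vec2 {k : ℕ} (c : Fin k → Fin k → ℝ) (m x y : Fin k → ℝ)
    (hx0 : ∀ i, 0 ≤ x i) (hxm : ∀ i, x i ≤ m i)
    (hy0 : ∀ j, 0 ≤ y j) (hym : ∀ j, y j ≤ m j) :
    ∃ A B : Finset (Fin k),
      |∑ i, ∑ j, c i j * (x i * y j)| / Real.sqrt ((∑ i, x i) * (∑ j, y j)) ≤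
      |∑ i ∈ A, ∑ j ∈ B, c i j * (m i * m j)| /
        Real.sqrt ((∑ i ∈ A, m i) * (∑ j ∈ B, m j)) := by
  have sqrt_mul' : ∀ p q : ℝ, 0 ≤ p → Real.sqrt (p * q) = Real.sqrt p * Real.sqrt q :=
    fun p q hp => Real.sqrt_mul hp q
  have hsx : 0 ≤ ∑ i, x i := Finset.sum_nonneg fun i _ => hx0 i
  have hsy : 0 ≤ ∑ j, y j := Finset.sum_nonneg fun j _ => hy0 j
  -- step 1: optimize in x
  obtain ⟨A, hA⟩ := vec (fun i => ∑ j, c i j * y j) m Finset.univ x hx0 hxm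
    (fun i hi => absurd (Finset.mem_univ i) hi)
  have hmA : 0 ≤ ∑ i ∈ A, m i := Finset.sum_nonneg fun i _ => (hx0 i).trans (hxm i)
  obtain ⟨B, hB⟩ := vec (fun j => ∑ i ∈ A, c i j * m i) m Finset.univ y hy0 hym
    (fun j hj => absurd (Finset.mem_univ j) hj)
  refine ⟨A, B, ?_⟩
  have e1 : ∑ i, ∑ j, c i j * (x i * y j) = ∑ i, (∑ j, c i j * y j) * x i := by
    refine Finset.sum_congr rfl fun i _ => ?_
    rw [Finset.sum_mul]
    exact Finset.sum_congr rfl fun j _ => by ring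
  have e2 : ∑ i ∈ A, (∑ j, c i j * y j) * m i = ∑ j, (∑ i ∈ A, c i j * m i) * y j := by
    calc ∑ i ∈ A, (∑ j, c i j * y j) * m i = ∑ i ∈ A, ∑ j, c i j * m i * y j := by
          refine Finset.sum_congr rfl fun i _ => ?_
          rw [Finset.sum_mul]
          exact Finset.sum_congr rfl fun j _ => by ring
      _ = ∑ j, ∑ i ∈ A, c i j * m i * y j := Finset.sum_comm
      _ = ∑ j, (∑ i ∈ A, c i j * m i) * y j := by
          refine Finset.sum_congr rfl fun j _ => ?_
          rw [Finset.sum_mul]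
  have e3 : ∑ j ∈ B, (∑ i ∈ A, c i j * m i) * m j = ∑ i ∈ A, ∑ j ∈ B, c i j * (m i * m j) := by
    calc ∑ j ∈ B, (∑ i ∈ A, c i j * m i) * m j = ∑ j ∈ B, ∑ i ∈ A, c i j * (m i * m j) := by
          refine Finset.sum_congr rfl fun j _ => ?_
          rw [Finset.sum_mul]
          exact Finset.sum_congr rfl fun i _ => by ring
      _ = ∑ i ∈ A, ∑ j ∈ B, c i j * (m i * m j) := Finset.sum_comm
  calc |∑ i, ∑ j, c i j * (x i * y j)| / Real.sqrt ((∑ i, x i) * (∑ j, y j))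
      = (|∑ i, (∑ j, c i j * y j) * x i| / Real.sqrt (∑ i, x i)) / Real.sqrt (∑ j, y j) := by
        rw [e1, sqrt_mul' _ _ hsx, div_div]
    _ ≤ (|∑ i ∈ A, (∑ j, c i j * y j) * m i| / Real.sqrt (∑ i ∈ A, m i)) / Real.sqrt (∑ j, y j) := by
        exact div_le_div_of_nonneg' hA (Real.sqrt_nonneg _)
    _ = (|∑ j, (∑ i ∈ A, c i j * m i) * y j| / Real.sqrt (∑ j, y j)) / Real.sqrt (∑ i ∈ A, m i) := by
        rw [e2, div_div, div_div, mul_comm]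
    _ ≤ (|∑ j ∈ B, (∑ i ∈ A, c i j * m i) * m j| / Real.sqrt (∑ j ∈ B, m j)) / Real.sqrt (∑ i ∈ A, m i) := by
        exact div_le_div_of_nonneg' hB (Real.sqrt_nonneg _)
    _ = |∑ i ∈ A, ∑ j ∈ B, c i j * (m i * m j)| / Real.sqrt ((∑ i ∈ A, m i) * (∑ j ∈ B, m j)) := by
        rw [e3, sqrt_mul' _ _ hmA, div_div, mul_comm]

section Decomp
variable {k : ℕ} (S : Fin k → Set ℝ)
    (hmeas : ∀ i, MeasurableSet (S i))
    (hdisj : Pairwise (Function.onFun Disjoint S))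
    (hcover : (⋃ i, S i) = Icc 0 1)
    (u : ℝ × ℝ → ℝ) (c : Fin k → Fin k → ℝ)
    (hc : ∀ i j : Fin k, ∀ p ∈ S i ×ˢ S j, u p = c i j)

omit hmeas hdisj hcover in
lemma vol_fin {X : Set ℝ} (hX : X ⊆ Icc 0 1) : volume X ≠ ⊤ := by
  have h1 : volume X ≤ volume (Icc (0:ℝ) 1) := measure_mono hX
  rw [Real.volume_Icc] at h1
  exact ne_top_of_le_ne_top (by simp) h1

include hcover in
lemma decompX {X : Set ℝ} (hX : X ⊆ Icc 0 1) : X = ⋃ i, X ∩ S i := by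
  rw [← Set.inter_iUnion, hcover, Set.inter_eq_left.2 hX]

include hmeas hdisj hcover in
lemma vol_decomp {X : Set ℝ} (hXm : MeasurableSet X) (hX : X ⊆ Icc 0 1) :
    (volume X).toReal = ∑ i, (volume (X ∩ S i)).toReal := by
  have h1 : volume X = ∑' i, volume (X ∩ S i) := by
    conv_lhs => rw [decompX S hcover hX]
    exact measure_iUnion
      (fun i j hij => Set.disjoint_of_subset Set.inter_subset_right Set.inter_subset_right
        (hdisj hij))
      (fun i => hXm.inter (hmeas i))
  rw [h1, tsum_fintype, ENNReal.toReal_sum]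
  intro i _
  exact vol_fin (fun x hx => hX hx.1)

include hmeas hdisj hcover hc in
lemma int_decomp {X Y : Set ℝ} (hXm : MeasurableSet X) (hYm : MeasurableSet Y)
    (hX : X ⊆ Icc 0 1) (hY : Y ⊆ Icc 0 1) :
    ∫ p in X ×ˢ Y, u p
      = ∑ i, ∑ j, c i j * ((volume (X ∩ S i)).toReal * (volume (Y ∩ S j)).toReal) := by
  have hprod : X ×ˢ Y = ⋃ p : Fin k × Fin k, (X ∩ S p.1) ×ˢ (Y ∩ S p.2) := by
    conv_lhs => rw [decompX S hcover hX, decompX S hcover hY]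
    rw [Set.iUnion_prod_const]
    ext q
    simp only [Set.mem_iUnion, Set.mem_prod]
    constructor
    · rintro ⟨i, hq1, j, hq2⟩; exact ⟨(i, j), hq1, hq2⟩
    · rintro ⟨⟨i, j⟩, hq1, hq2⟩; exact ⟨i, hq1, j, hq2⟩
  have hpm : ∀ p : Fin k × Fin k, MeasurableSet ((X ∩ S p.1) ×ˢ (Y ∩ S p.2)) :=
    fun p => (hXm.inter (hmeas p.1)).prod (hYm.inter (hmeas p.2))
  have hpd : Pairwise (Function.onFun Disjoint
      (fun p : Fin k × Fin k => (X ∩ S p.1) ×ˢ (Y ∩ S p.2))) := by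
    intro p q hpq
    have h : p.1 ≠ q.1 ∨ p.2 ≠ q.2 := by
      by_contra h
      push_neg at h
      exact hpq (Prod.ext h.1 h.2)
    rw [Function.onFun, Set.disjoint_left]
    rintro ⟨x, y⟩ ⟨hx, hy⟩ ⟨hx', hy'⟩
    rcases h with h | h
    · exact Set.disjoint_left.1 (hdisj h) hx.2 hx'.2
    · exact Set.disjoint_left.1 (hdisj h) hy.2 hy'.2
  have hvol : ∀ p : Fin k × Fin k,
      volume ((X ∩ S p.1) ×ˢ (Y ∩ S p.2)) = volume (X ∩ S p.1) * volume (Y ∩ S p.2) := by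
    intro p
    rw [MeasureTheory.Measure.volume_eq_prod, Measure.prod_prod]
  have hintp : ∀ p : Fin k × Fin k, IntegrableOn u ((X ∩ S p.1) ×ˢ (Y ∩ S p.2)) := by
    intro p
    have hsub : (X ∩ S p.1) ×ˢ (Y ∩ S p.2) ⊆ S p.1 ×ˢ S p.2 :=
      Set.prod_mono Set.inter_subset_right Set.inter_subset_right
    have hfin : volume ((X ∩ S p.1) ×ˢ (Y ∩ S p.2)) < ⊤ := by
      rw [hvol p]
      exact ENNReal.mul_lt_top
        (lt_top_iff_ne_top.2 (vol_fin (fun x hx => hX hx.1)))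
        (lt_top_iff_ne_top.2 (vol_fin (fun x hx => hY hx.1)))
    exact (integrableOn_const hfin.ne).congr_fun
      (fun q hq => (hc p.1 p.2 q (hsub hq)).symm) (hpm p)
  have hint : IntegrableOn u (⋃ p : Fin k × Fin k, (X ∩ S p.1) ×ˢ (Y ∩ S p.2)) :=
    integrableOn_finite_iUnion.2 hintp
  rw [hprod, MeasureTheory.integral_iUnion hpm hpd hint, tsum_fintype,
    Fintype.sum_prod_type]
  refine Finset.sum_congr rfl fun i _ => Finset.sum_congr rfl fun j _ => ?_
  have hsub : (X ∩ S i) ×ˢ (Y ∩ S j) ⊆ S i ×ˢ S j :=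
    Set.prod_mono Set.inter_subset_right Set.inter_subset_right
  rw [MeasureTheory.setIntegral_congr_fun (hpm (i, j))
    (fun q hq => hc i j q (hsub hq) : Set.EqOn u (fun _ => c i j) ((X ∩ S i) ×ˢ (Y ∩ S j)))]
  rw [MeasureTheory.setIntegral_const, Measure.real, hvol (i, j), ENNReal.toReal_mul, smul_eq_mul]
  ring
end Decomp

section Main
variable {k : ℕ} {S : Fin k → Set ℝ}
    (hmeas : ∀ i, MeasurableSet (S i))
    (hdisj : Pairwise (Function.onFun Disjoint S))
    (hcover : (⋃ i, S i) = Icc 0 1)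

omit hmeas hdisj in
include hcover in
lemma biUnion_sub (A : Finset (Fin k)) : (⋃ i ∈ A, S i) ⊆ Icc 0 1 := by
  refine Set.iUnion₂_subset fun i _ => ?_
  rw [← hcover]
  exact Set.subset_iUnion _ i

omit hdisj hcover in
include hmeas in
lemma biUnion_meas (A : Finset (Fin k)) : MeasurableSet (⋃ i ∈ A, S i) :=
  MeasurableSet.biUnion A.countable_toSet fun i _ => hmeas i

omit hmeas hcover in
include hdisj in
lemma biUnion_cap (A : Finset (Fin k)) (i : Fin k) :
    (⋃ a ∈ A, S a) ∩ S i = if i ∈ A then S i else ∅ := by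
  split_ifs with hi
  · ext x
    constructor
    · exact fun h => h.2
    · exact fun hx => ⟨Set.mem_biUnion hi hx, hx⟩
  · ext x
    simp only [Set.mem_inter_iff, Set.mem_iUnion, Set.mem_empty_iff_false, iff_false]
    rintro ⟨⟨a, ha, hxa⟩, hxi⟩
    exact Set.disjoint_left.1 (hdisj (fun h : a = i => hi (h ▸ ha))) hxa hxi

include hmeas hdisj hcover in
lemma biUnion_vol (A : Finset (Fin k)) :
    (volume (⋃ i ∈ A, S i)).toReal = ∑ i ∈ A, (volume (S i)).toReal := by
  rw [vol_decomp S hmeas hdisj hcover (biUnion_meas hmeas A) (biUnion_sub hcover A)]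
  rw [Finset.sum_congr rfl (fun i _ => by rw [biUnion_cap hdisj A i] :
    ∀ i ∈ Finset.univ, (volume ((⋃ a ∈ A, S a) ∩ S i)).toReal
      = (volume (if i ∈ A then S i else ∅)).toReal)]
  rw [← Finset.sum_filter_of_ne (p := fun i => i ∈ A)
    (fun i _ h => by by_contra hi; simp [hi] at h)]
  rw [show Finset.univ.filter (fun i => i ∈ A) = A by ext i; simp]
  exact Finset.sum_congr rfl fun i hi => by rw [if_pos hi]
end Main

section Main2
variable {k : ℕ} {S : Fin k → Set ℝ}
    (hmeas : ∀ i, MeasurableSet (S i))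
    (hdisj : Pairwise (Function.onFun Disjoint S))
    (hcover : (⋃ i, S i) = Icc 0 1)
    {u : ℝ × ℝ → ℝ} {c : Fin k → Fin k → ℝ}
    (hc : ∀ i j : Fin k, ∀ p ∈ S i ×ˢ S j, u p = c i j)

include hmeas hdisj hcover hc in
lemma F_formula (A B : Finset (Fin k)) :
    ∫ p in (⋃ i ∈ A, S i) ×ˢ (⋃ j ∈ B, S j), u p
      = ∑ i ∈ A, ∑ j ∈ B, c i j * ((volume (S i)).toReal * (volume (S j)).toReal) := by
  rw [int_decomp S hmeas hdisj hcover u c hc (biUnion_meas hmeas A) (biUnion_meas hmeas B)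
    (biUnion_sub hcover A) (biUnion_sub hcover B)]
  have hxA : ∀ i, (volume ((⋃ a ∈ A, S a) ∩ S i)).toReal
      = if i ∈ A then (volume (S i)).toReal else 0 := by
    intro i; rw [biUnion_cap hdisj A i]; split_ifs <;> simp
  have hyB : ∀ j, (volume ((⋃ a ∈ B, S a) ∩ S j)).toReal
      = if j ∈ B then (volume (S j)).toReal else 0 := by
    intro j; rw [biUnion_cap hdisj B j]; split_ifs <;> simp
  calc ∑ i, ∑ j, c i j * ((volume ((⋃ a ∈ A, S a) ∩ S i)).toReal
          * (volume ((⋃ a ∈ B, S a) ∩ S j)).toReal)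
      = ∑ i ∈ A, ∑ j, c i j * ((volume ((⋃ a ∈ A, S a) ∩ S i)).toReal
          * (volume ((⋃ a ∈ B, S a) ∩ S j)).toReal) :=
        (Finset.sum_subset A.subset_univ (fun i _ hi =>
          Finset.sum_eq_zero fun j _ => by rw [hxA i]; simp [hi])).symm
    _ = ∑ i ∈ A, ∑ j ∈ B, c i j * ((volume ((⋃ a ∈ A, S a) ∩ S i)).toReal
          * (volume ((⋃ a ∈ B, S a) ∩ S j)).toReal) :=
        Finset.sum_congr rfl fun i _ => (Finset.sum_subset B.subset_univ (fun j _ hj =>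
          by rw [hyB j]; simp [hj])).symm
    _ = ∑ i ∈ A, ∑ j ∈ B, c i j * ((volume (S i)).toReal * (volume (S j)).toReal) :=
        Finset.sum_congr rfl fun i hi => Finset.sum_congr rfl fun j hj => by
          rw [hxA i, hyB j, if_pos hi, if_pos hj]
end Main2

/-- For a stepfunction with steps in a measurable partition `P × P` of `[0,1]`,
the jumble norm is attained on unions of partition classes. -/
theorem jumble_attained_on_partition_unions (k : ℕ) (S : Fin k → Set ℝ)
    (hmeas : ∀ i, MeasurableSet (S i))
    (hdisj : Pairwise (Function.onFun Disjoint S))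
    (hcover : (⋃ i, S i) = Icc 0 1)
    (u : ℝ × ℝ → ℝ)
    (hstep : ∀ i j : Fin k, ∃ c : ℝ, ∀ p ∈ S i ×ˢ S j, u p = c) :
    ∃ A B : Finset (Fin k),
      jumbleNorm u =
        |∫ p in (⋃ i ∈ A, S i) ×ˢ (⋃ j ∈ B, S j), u p| /
          Real.sqrt ((volume (⋃ i ∈ A, S i)).toReal * (volume (⋃ j ∈ B, S j)).toReal) := by
  classical
  set c : Fin k → Fin k → ℝ := fun i j => (hstep i j).choose with hcdef
  have hc : ∀ i j : Fin k, ∀ p ∈ S i ×ˢ S j, u p = c i j := fun i j => (hstep i j).choose_spec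
  set m : Fin k → ℝ := fun i => (volume (S i)).toReal with hmdef
  have hm0 : ∀ i, 0 ≤ m i := fun i => ENNReal.toReal_nonneg
  have hSfin : ∀ i, volume (S i) ≠ ⊤ := by
    intro i
    refine vol_fin fun x hx => ?_
    rw [← hcover]; exact Set.mem_iUnion.2 ⟨i, hx⟩
  set F : Finset (Fin k) × Finset (Fin k) → ℝ := fun P =>
    |∫ p in (⋃ i ∈ P.1, S i) ×ˢ (⋃ j ∈ P.2, S j), u p| /
      Real.sqrt ((volume (⋃ i ∈ P.1, S i)).toReal * (volume (⋃ j ∈ P.2, S j)).toReal)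
      with hFdef
  have hFval : ∀ P : Finset (Fin k) × Finset (Fin k),
      F P = |∑ i ∈ P.1, ∑ j ∈ P.2, c i j * (m i * m j)| /
        Real.sqrt ((∑ i ∈ P.1, m i) * (∑ j ∈ P.2, m j)) := by
    intro P
    rw [hFdef]
    dsimp only
    rw [F_formula hmeas hdisj hcover hc P.1 P.2,
      biUnion_vol hmeas hdisj hcover P.1, biUnion_vol hmeas hdisj hcover P.2]
  -- the maximizing pair
  obtain ⟨P₀, _, hP₀⟩ := Finset.exists_max_image (Finset.univ :
    Finset (Finset (Fin k) × Finset (Fin k))) F ⟨(∅, ∅), Finset.mem_univ _⟩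
  -- the defining set of the jumble norm
  set 𝒮 : Set ℝ := {r : ℝ | ∃ X Y : Set ℝ, MeasurableSet X ∧ MeasurableSet Y ∧
    X ⊆ Icc 0 1 ∧ Y ⊆ Icc 0 1 ∧ 0 < (volume X).toReal ∧ 0 < (volume Y).toReal ∧
    r = |∫ p in X ×ˢ Y, u p| / Real.sqrt ((volume X).toReal * (volume Y).toReal)} with h𝒮
  have hvol01 : (volume (Icc (0:ℝ) 1)).toReal = 1 := by
    rw [Real.volume_Icc]; norm_num
  have hr₀ : (|∫ p in (Icc 0 1) ×ˢ (Icc 0 1), u p| /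
      Real.sqrt ((volume (Icc (0:ℝ) 1)).toReal * (volume (Icc (0:ℝ) 1)).toReal)) ∈ 𝒮 :=
    ⟨Icc 0 1, Icc 0 1, measurableSet_Icc, measurableSet_Icc, le_refl _, le_refl _,
      by rw [hvol01]; norm_num, by rw [hvol01]; norm_num, rfl⟩
  have hne : 𝒮.Nonempty := ⟨_, hr₀⟩
  -- every element of 𝒮 is at most F P₀
  have hub : ∀ r ∈ 𝒮, r ≤ F P₀ := by
    rintro r ⟨X, Y, hXm, hYm, hX, hY, -, -, rfl⟩
    set x : Fin k → ℝ := fun i => (volume (X ∩ S i)).toReal with hxdef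
    set y : Fin k → ℝ := fun j => (volume (Y ∩ S j)).toReal with hydef
    have hxm : ∀ i, x i ≤ m i := fun i =>
      ENNReal.toReal_mono (hSfin i) (measure_mono Set.inter_subset_right)
    have hym : ∀ j, y j ≤ m j := fun j =>
      ENNReal.toReal_mono (hSfin j) (measure_mono Set.inter_subset_right)
    obtain ⟨A, B, hAB⟩ := vec2 c m x y (fun i => ENNReal.toReal_nonneg) hxm
      (fun j => ENNReal.toReal_nonneg) hym
    have e1 : |∫ p in X ×ˢ Y, u p| / Real.sqrt ((volume X).toReal * (volume Y).toReal)
        = |∑ i, ∑ j, c i j * (x i * y j)| / Real.sqrt ((∑ i, x i) * (∑ j, y j)) := by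
      rw [int_decomp S hmeas hdisj hcover u c hc hXm hYm hX hY,
        vol_decomp S hmeas hdisj hcover hXm hX, vol_decomp S hmeas hdisj hcover hYm hY]
    rw [e1]
    refine hAB.trans ?_
    rw [← hFval (A, B)]
    exact hP₀ (A, B) (Finset.mem_univ _)
  have hbdd : BddAbove 𝒮 := ⟨F P₀, hub⟩
  have hF0 : 0 ≤ F P₀ := div_nonneg (abs_nonneg _) (Real.sqrt_nonneg _)
  refine ⟨P₀.1, P₀.2, ?_⟩
  have hgoal : jumbleNorm u = F P₀ := by
    rw [jumbleNorm, ← h𝒮]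
    refine le_antisymm (csSup_le hne hub) ?_
    by_cases hpos : 0 < (volume (⋃ i ∈ P₀.1, S i)).toReal ∧
        0 < (volume (⋃ j ∈ P₀.2, S j)).toReal
    · refine le_csSup hbdd ?_
      exact ⟨⋃ i ∈ P₀.1, S i, ⋃ j ∈ P₀.2, S j, biUnion_meas hmeas P₀.1, biUnion_meas hmeas P₀.2,
        biUnion_sub hcover P₀.1, biUnion_sub hcover P₀.2, hpos.1, hpos.2, rfl⟩
    · have hz : F P₀ = 0 := by
        rw [hFdef]
        dsimp only
        rcases not_and_or.1 hpos with h | h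
        · have : (volume (⋃ i ∈ P₀.1, S i)).toReal = 0 :=
            le_antisymm (not_lt.1 h) ENNReal.toReal_nonneg
          rw [this, zero_mul, Real.sqrt_zero, div_zero]
        · have : (volume (⋃ j ∈ P₀.2, S j)).toReal = 0 :=
            le_antisymm (not_lt.1 h) ENNReal.toReal_nonneg
          rw [this, mul_zero, Real.sqrt_zero, div_zero]
      rw [hz]
      refine le_trans ?_ (le_csSup hbdd hr₀)
      exact div_nonneg (abs_nonneg _) (Real.sqrt_nonneg _)
  exact hgoal
end

section
/- For a nonnegative function f ∈ L^3([0,1]), the functional K(f) := ∫_0^∞ √(λ{x : f(x) ≥ t}) dt satisfies K(f) ≤ 2^{1/3} ‖f‖_3. -/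
open MeasureTheory Set
open scoped ENNReal

/-- The `L^p` norm of a function on `[0,1]`. -/
noncomputable def lpNorm1 (f : ℝ → ℝ) (p : ℝ) : ℝ :=
  (eLpNorm f (ENNReal.ofReal p) (volume.restrict (Icc 0 1))).toReal

private lemma lint_rpow_Ioo {p a : ℝ} (hp : -1 < p) (ha : 0 ≤ a) :
    ∫⁻ x in Ioo (0:ℝ) a, ENNReal.ofReal (x ^ p) = ENNReal.ofReal (a ^ (p + 1) / (p + 1)) := by
  have hp1 : p + 1 ≠ 0 := by linarith
  have hint : IntegrableOn (fun x : ℝ => x ^ p) (Ioo 0 a) volume := by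
    have h := (intervalIntegral.intervalIntegrable_rpow' (a := 0) (b := a) hp).1
    exact h.mono_set Ioo_subset_Ioc_self
  have hnn : 0 ≤ᵐ[volume.restrict (Ioo (0:ℝ) a)] fun x : ℝ => x ^ p := by
    filter_upwards [self_mem_ae_restrict (measurableSet_Ioo : MeasurableSet (Ioo (0:ℝ) a))]
      with x hx
    exact Real.rpow_nonneg hx.1.le _
  rw [← ofReal_integral_eq_lintegral_ofReal hint hnn]
  congr 1
  have h1 : ∫ x in Ioo (0:ℝ) a, x ^ p = ∫ x in (0:ℝ)..a, x ^ p := by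
    rw [intervalIntegral.integral_of_le ha, MeasureTheory.integral_Ioc_eq_integral_Ioo]
  rw [h1, integral_rpow (Or.inl hp), Real.zero_rpow hp1, sub_zero]

theorem K_le_L3 (f : ℝ → ℝ) (hf0 : ∀ x, 0 ≤ f x)
    (hf : MemLp f 3 (volume.restrict (Icc 0 1))) :
    (∫ t in Ioi (0:ℝ), Real.sqrt ((volume {x ∈ Icc (0:ℝ) 1 | t ≤ f x}).toReal)) ≤
      (2:ℝ) ^ ((1:ℝ)/3) * lpNorm1 f 3 := by
  classical
  set μb : ℝ → ℝ≥0∞ := fun t => volume {x ∈ Icc (0:ℝ) 1 | t ≤ f x} with hμb_def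
  -- basic facts about μb
  have hμb_anti : Antitone μb := by
    intro s t hst
    exact measure_mono (fun x hx => ⟨hx.1, le_trans hst hx.2⟩)
  have hμb_meas : Measurable μb := hμb_anti.measurable
  have hμb_le_one : ∀ t, μb t ≤ 1 := by
    intro t
    calc μb t ≤ volume (Icc (0:ℝ) 1) := measure_mono (fun x hx => hx.1)
    _ = 1 := by simp [Real.volume_Icc]
  have hμb_ne_top : ∀ t, μb t ≠ ∞ := fun t => (lt_of_le_of_lt (hμb_le_one t) (by norm_num)).ne
  -- the cube integral
  set Ib : ℝ≥0∞ := ∫⁻ x in Icc (0:ℝ) 1, ENNReal.ofReal (f x ^ (3:ℝ)) with hIb_def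
  have hf_aem : AEMeasurable f (volume.restrict (Icc (0:ℝ) 1)) := hf.1.aemeasurable
  have hIb_eq : Ib = ∫⁻ x in Icc (0:ℝ) 1, ‖f x‖ₑ ^ (3:ℝ) := by
    rw [hIb_def]
    refine lintegral_congr fun x => ?_
    rw [Real.enorm_eq_ofReal (hf0 x), ENNReal.ofReal_rpow_of_nonneg (hf0 x) (by norm_num)]
  have hIb_ne_top : Ib ≠ ∞ := by
    rw [hIb_eq]
    have h := lintegral_rpow_enorm_lt_top_of_eLpNorm_lt_top (p := (3:ℝ≥0∞))
      (f := f) (by norm_num) (by norm_num) hf.2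
    simpa using h.ne
  have hIb_eq2 : Ib = ∫⁻ x in Icc (0:ℝ) 1, (ENNReal.ofReal (f x)) ^ (3:ℝ) := by
    rw [hIb_def]
    refine lintegral_congr fun x => ?_
    rw [ENNReal.ofReal_rpow_of_nonneg (hf0 x) (by norm_num)]
  -- Chebyshev
  have cheb : ∀ t : ℝ, 0 < t → ENNReal.ofReal (t ^ (3:ℝ)) * μb t ≤ Ib := by
    intro t ht
    have hrestrict : μb t = (volume.restrict (Icc (0:ℝ) 1)) {x | t ≤ f x} := by
      rw [Measure.restrict_apply' measurableSet_Icc]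
      exact congrArg volume (by ext x; simp only [mem_sep_iff, mem_inter_iff, mem_setOf_eq]; tauto)
    have hg_aem : AEMeasurable (fun x => (ENNReal.ofReal (f x)) ^ (3:ℝ))
        (volume.restrict (Icc (0:ℝ) 1)) :=
      ENNReal.continuous_rpow_const.measurable.comp_aemeasurable
        (ENNReal.measurable_ofReal.comp_aemeasurable hf_aem)
    have hset : {x : ℝ | t ≤ f x} ⊆
        {x : ℝ | ENNReal.ofReal (t ^ (3:ℝ)) ≤ (ENNReal.ofReal (f x)) ^ (3:ℝ)} := by
      intro x hx
      simp only [mem_setOf_eq]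
      rw [ENNReal.ofReal_rpow_of_nonneg (hf0 x) (by norm_num : (0:ℝ) ≤ 3)]
      exact ENNReal.ofReal_le_ofReal (Real.rpow_le_rpow ht.le hx (by norm_num))
    calc ENNReal.ofReal (t ^ (3:ℝ)) * μb t
        ≤ ENNReal.ofReal (t ^ (3:ℝ)) * (volume.restrict (Icc (0:ℝ) 1))
            {x | ENNReal.ofReal (t ^ (3:ℝ)) ≤ (ENNReal.ofReal (f x)) ^ (3:ℝ)} := by
          rw [hrestrict]
          exact mul_le_mul_right (measure_mono hset) _
      _ ≤ ∫⁻ x in Icc (0:ℝ) 1, (ENNReal.ofReal (f x)) ^ (3:ℝ) :=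
          mul_meas_ge_le_lintegral₀ hg_aem _
      _ = Ib := hIb_eq2.symm
  -- the "inverse distribution"
  set νb : ℝ → ℝ≥0∞ := fun x => volume {t ∈ Ioi (0:ℝ) | ENNReal.ofReal x < μb t} with hνb_def
  have hνb_anti : Antitone νb := by
    intro s t hst
    refine measure_mono (fun u hu => ⟨hu.1, lt_of_le_of_lt ?_ hu.2⟩)
    exact ENNReal.ofReal_le_ofReal hst
  have hνb_meas : Measurable νb := hνb_anti.measurable
  have hνb_zero : ∀ x : ℝ, 1 ≤ x → νb x = 0 := by
    intro x hx
    have : {t ∈ Ioi (0:ℝ) | ENNReal.ofReal x < μb t} = ∅ := by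
      ext t
      simp only [mem_sep_iff, mem_empty_iff_false, iff_false, not_and]
      intro _
      exact not_lt.2 (le_trans (hμb_le_one t) (by
        simpa using ENNReal.ofReal_le_ofReal hx))
    exact (congrArg volume this).trans measure_empty
  have hνb_ne_top : ∀ x : ℝ, 0 < x → νb x ≠ ∞ := by
    intro x hx
    set T := max 1 (Ib.toReal / x) with hT
    have hsub : {t ∈ Ioi (0:ℝ) | ENNReal.ofReal x < μb t} ⊆ Ioc 0 T := by
      intro t ht
      refine ⟨ht.1, ?_⟩
      by_contra hTt
      push_neg at hTt
      have ht1 : 1 < t := lt_of_le_of_lt (le_max_left _ _) hTt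
      have h2 : ENNReal.ofReal (t ^ (3:ℝ)) * ENNReal.ofReal x ≤ Ib :=
        le_trans (mul_le_mul_right ht.2.le _) (cheb t ht.1)
      rw [← ENNReal.ofReal_mul (Real.rpow_nonneg (le_of_lt ht.1) _)] at h2
      have h3 : t ^ (3:ℝ) * x ≤ Ib.toReal := by
        have h := ENNReal.toReal_mono hIb_ne_top h2
        rwa [ENNReal.toReal_ofReal (by positivity)] at h
      have h4 : t ≤ t ^ (3:ℝ) := by
        nth_rewrite 1 [← Real.rpow_one t]
        exact Real.rpow_le_rpow_of_exponent_le ht1.le (by norm_num)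
      have h5 : t * x ≤ Ib.toReal := le_trans (by nlinarith) h3
      have h6 : t ≤ Ib.toReal / x := (le_div_iff₀ hx).2 h5
      exact absurd hTt (not_lt.2 (h6.trans (le_max_right 1 _)))
    exact ((measure_mono hsub).trans_lt (by rw [Real.volume_Ioc]; exact ENNReal.ofReal_lt_top)).ne
  -- step 1 : sqrt μb t as an integral in x
  have hwmeas : Measurable fun x : ℝ => ENNReal.ofReal ((2 * Real.sqrt x)⁻¹) :=
    ENNReal.measurable_ofReal.comp ((continuous_const.mul Real.continuous_sqrt).measurable.inv)
  have hweq : ∀ x : ℝ, 0 < x →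
      ENNReal.ofReal ((2 * Real.sqrt x)⁻¹) = ENNReal.ofReal (2⁻¹ * x ^ (-(1:ℝ)/2)) := by
    intro x hx
    congr 1
    rw [Real.sqrt_eq_rpow, mul_inv, show (-(1:ℝ)/2) = -(1/2 : ℝ) by norm_num,
      Real.rpow_neg hx.le]
  have step1 : ∀ t : ℝ, (μb t) ^ ((1:ℝ)/2) =
      ∫⁻ x in Ioi (0:ℝ),
        ({p : ℝ × ℝ | ENNReal.ofReal p.2 < μb p.1}.indicator
          (fun p => ENNReal.ofReal ((2 * Real.sqrt p.2)⁻¹)) (t, x)) := by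
    intro t
    have hsmeas : MeasurableSet {x : ℝ | ENNReal.ofReal x < μb t} :=
      measurableSet_lt ENNReal.measurable_ofReal measurable_const
    have hind : ∀ x : ℝ, ({p : ℝ × ℝ | ENNReal.ofReal p.2 < μb p.1}.indicator
          (fun p => ENNReal.ofReal ((2 * Real.sqrt p.2)⁻¹)) (t, x))
        = ({x : ℝ | ENNReal.ofReal x < μb t}.indicator
          (fun x => ENNReal.ofReal ((2 * Real.sqrt x)⁻¹)) x) := by
      intro x
      by_cases h : ENNReal.ofReal x < μb t <;> simp [Set.indicator, h]
    simp_rw [hind]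
    rw [lintegral_indicator hsmeas, Measure.restrict_restrict hsmeas]
    have hseteq : {x : ℝ | ENNReal.ofReal x < μb t} ∩ Ioi 0 = Ioo 0 ((μb t).toReal) := by
      ext x
      simp only [mem_inter_iff, mem_setOf_eq, mem_Ioi, mem_Ioo]
      constructor
      · rintro ⟨h1, h2⟩
        exact ⟨h2, (ENNReal.ofReal_lt_iff_lt_toReal h2.le (hμb_ne_top t)).1 h1⟩
      · rintro ⟨h1, h2⟩
        exact ⟨(ENNReal.ofReal_lt_iff_lt_toReal h1.le (hμb_ne_top t)).2 h2, h1⟩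
    rw [hseteq]
    have hcongr : ∫⁻ x in Ioo (0:ℝ) ((μb t).toReal), ENNReal.ofReal ((2 * Real.sqrt x)⁻¹)
        = ∫⁻ x in Ioo (0:ℝ) ((μb t).toReal), ENNReal.ofReal (2⁻¹ * x ^ (-(1:ℝ)/2)) := by
      refine setLIntegral_congr_fun_ae measurableSet_Ioo (ae_of_all _ fun x hx => ?_)
      exact hweq x hx.1
    rw [hcongr]
    have hconst : ∀ x : ℝ, ENNReal.ofReal (2⁻¹ * x ^ (-(1:ℝ)/2))
        = ENNReal.ofReal 2⁻¹ * ENNReal.ofReal (x ^ (-(1:ℝ)/2)) := fun x =>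
      ENNReal.ofReal_mul (by norm_num)
    simp_rw [hconst]
    rw [lintegral_const_mul' _ _ ENNReal.ofReal_ne_top,
      lint_rpow_Ioo (by norm_num) ENNReal.toReal_nonneg]
    have he : (-(1:ℝ)/2 + 1) = (1:ℝ)/2 := by norm_num
    rw [he, ← ENNReal.ofReal_mul (by norm_num)]
    have harith : (2:ℝ)⁻¹ * ((μb t).toReal ^ ((1:ℝ)/2) / ((1:ℝ)/2)) = (μb t).toReal ^ ((1:ℝ)/2) := by
      ring
    rw [harith, ← ENNReal.ofReal_rpow_of_nonneg ENNReal.toReal_nonneg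
      (by norm_num : (0:ℝ) ≤ 1/2), ENNReal.ofReal_toReal (hμb_ne_top t)]
  -- Fubini
  have step2 : (∫⁻ t in Ioi (0:ℝ), (μb t) ^ ((1:ℝ)/2)) =
      ∫⁻ x in Ioi (0:ℝ), ENNReal.ofReal ((2 * Real.sqrt x)⁻¹) * νb x := by
    have hSmeas : MeasurableSet {p : ℝ × ℝ | ENNReal.ofReal p.2 < μb p.1} :=
      measurableSet_lt (ENNReal.measurable_ofReal.comp measurable_snd)
        (hμb_meas.comp measurable_fst)
    have hFmeas : Measurable fun p : ℝ × ℝ =>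
        ({p : ℝ × ℝ | ENNReal.ofReal p.2 < μb p.1}.indicator
          (fun p => ENNReal.ofReal ((2 * Real.sqrt p.2)⁻¹)) p) :=
      (hwmeas.comp measurable_snd).indicator hSmeas
    calc (∫⁻ t in Ioi (0:ℝ), (μb t) ^ ((1:ℝ)/2))
        = ∫⁻ t in Ioi (0:ℝ), ∫⁻ x in Ioi (0:ℝ),
            ({p : ℝ × ℝ | ENNReal.ofReal p.2 < μb p.1}.indicator
              (fun p => ENNReal.ofReal ((2 * Real.sqrt p.2)⁻¹)) (t, x)) := by
          exact lintegral_congr fun t => step1 t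
      _ = ∫⁻ x in Ioi (0:ℝ), ∫⁻ t in Ioi (0:ℝ),
            ({p : ℝ × ℝ | ENNReal.ofReal p.2 < μb p.1}.indicator
              (fun p => ENNReal.ofReal ((2 * Real.sqrt p.2)⁻¹)) (t, x)) := by
          exact lintegral_lintegral_swap hFmeas.aemeasurable
      _ = ∫⁻ x in Ioi (0:ℝ), ENNReal.ofReal ((2 * Real.sqrt x)⁻¹) * νb x := by
          refine lintegral_congr fun x => ?_
          have hsmeas2 : MeasurableSet {t : ℝ | ENNReal.ofReal x < μb t} :=
            measurableSet_lt measurable_const hμb_meas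
          have hind2 : ∀ t : ℝ, ({p : ℝ × ℝ | ENNReal.ofReal p.2 < μb p.1}.indicator
                (fun p => ENNReal.ofReal ((2 * Real.sqrt p.2)⁻¹)) (t, x))
              = ({t : ℝ | ENNReal.ofReal x < μb t}.indicator
                (fun _ => ENNReal.ofReal ((2 * Real.sqrt x)⁻¹)) t) := by
            intro t
            by_cases h : ENNReal.ofReal x < μb t <;> simp [Set.indicator, h]
          simp_rw [hind2]
          rw [lintegral_indicator hsmeas2, setLIntegral_const,
            Measure.restrict_apply hsmeas2]
          congr 1
          refine congrArg volume ?_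
          ext u
          simp only [mem_inter_iff, mem_setOf_eq, mem_sep_iff, mem_Ioi]
          tauto
  -- restrict to (0,1)
  have step3 : (∫⁻ x in Ioi (0:ℝ), ENNReal.ofReal ((2 * Real.sqrt x)⁻¹) * νb x) =
      ∫⁻ x in Ioo (0:ℝ) 1, ENNReal.ofReal ((2 * Real.sqrt x)⁻¹) * νb x := by
    have hunion : Ioo (0:ℝ) 1 ∪ Ici 1 = Ioi 0 := Ioo_union_Ici_eq_Ioi (by norm_num)
    rw [← hunion, lintegral_union measurableSet_Ici
      ((Set.Iio_disjoint_Ici le_rfl).mono_left Set.Ioo_subset_Iio_self)]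
    have hzero : (∫⁻ x in Ici (1:ℝ), ENNReal.ofReal ((2 * Real.sqrt x)⁻¹) * νb x) = 0 := by
      rw [setLIntegral_congr_fun_ae measurableSet_Ici
        (ae_of_all _ fun x hx => by rw [hνb_zero x hx, mul_zero] : _)]
      exact lintegral_zero
    rw [hzero, add_zero]
  -- Hölder
  have step4 : (∫⁻ x in Ioo (0:ℝ) 1, ENNReal.ofReal ((2 * Real.sqrt x)⁻¹) * νb x) ≤
      (∫⁻ x in Ioo (0:ℝ) 1, ENNReal.ofReal ((2 * Real.sqrt x)⁻¹) ^ ((3:ℝ)/2)) ^ ((2:ℝ)/3) *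
      (∫⁻ x in Ioo (0:ℝ) 1, νb x ^ (3:ℝ)) ^ ((1:ℝ)/3) := by
    have hpq : Real.HolderConjugate ((3:ℝ)/2) 3 := by constructor <;> norm_num
    have h := ENNReal.lintegral_mul_le_Lp_mul_Lq (volume.restrict (Ioo (0:ℝ) 1)) hpq
      hwmeas.aemeasurable hνb_meas.aemeasurable
    simp only [Pi.mul_apply] at h
    convert h using 2 <;> norm_num
  -- compute weight integral
  have step5 : (∫⁻ x in Ioo (0:ℝ) 1, ENNReal.ofReal ((2 * Real.sqrt x)⁻¹) ^ ((3:ℝ)/2)) =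
      ENNReal.ofReal (Real.sqrt 2) := by
    have hpt : ∀ x : ℝ, x ∈ Ioo (0:ℝ) 1 →
        ENNReal.ofReal ((2 * Real.sqrt x)⁻¹) ^ ((3:ℝ)/2)
          = ENNReal.ofReal ((2 ^ ((3:ℝ)/2))⁻¹) * ENNReal.ofReal (x ^ (-(3:ℝ)/4)) := by
      intro x hx
      have hx0 : 0 < x := hx.1
      rw [ENNReal.ofReal_rpow_of_nonneg (by positivity) (by norm_num : (0:ℝ) ≤ 3/2),
        ← ENNReal.ofReal_mul (by positivity)]
      congr 1
      rw [Real.sqrt_eq_rpow, ← Real.rpow_neg_one (2 * x ^ ((1:ℝ)/2))]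
      rw [← Real.rpow_mul (by positivity : (0:ℝ) ≤ 2 * x ^ ((1:ℝ)/2))]
      rw [show ((-1:ℝ) * (3/2)) = -(3/2) by norm_num]
      rw [Real.mul_rpow (by norm_num) (by positivity)]
      rw [← Real.rpow_mul hx0.le]
      rw [Real.rpow_neg (by norm_num : (0:ℝ) ≤ 2)]
      norm_num
    rw [setLIntegral_congr_fun_ae measurableSet_Ioo (ae_of_all _ hpt)]
    rw [lintegral_const_mul' _ _ ENNReal.ofReal_ne_top,
      lint_rpow_Ioo (by norm_num : (-1:ℝ) < -3/4) (by norm_num : (0:ℝ) ≤ 1)]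
    rw [← ENNReal.ofReal_mul (by positivity)]
    congr 1
    have h1 : (-(3:ℝ)/4 + 1) = (1:ℝ)/4 := by norm_num
    rw [h1, Real.one_rpow]
    have h2 : (2:ℝ) ^ ((3:ℝ)/2) = 2 * Real.sqrt 2 := by
      rw [Real.sqrt_eq_rpow, show ((3:ℝ)/2) = 1 + 1/2 by norm_num,
        Real.rpow_add (by norm_num), Real.rpow_one]
    rw [h2]
    have h3 : Real.sqrt 2 * Real.sqrt 2 = 2 := Real.mul_self_sqrt (by norm_num)
    have h4 : Real.sqrt 2 > 0 := Real.sqrt_pos.2 (by norm_num)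
    field_simp
    nlinarith [h3, h4]
  -- compare cube integrals
  have step6 : (∫⁻ x in Ioo (0:ℝ) 1, νb x ^ (3:ℝ)) ≤ Ib := by
    set mb : ℝ → ℝ≥0∞ := fun s => volume {x ∈ Icc (0:ℝ) 1 | s < f x} with hmb_def
    have hmb_anti : Antitone mb := by
      intro s t hst
      exact measure_mono (fun x hx => ⟨hx.1, lt_of_le_of_lt hst hx.2⟩)
    have hmb_meas : Measurable mb := hmb_anti.measurable
    have hmb_ne_top : ∀ s, mb s ≠ ∞ := by
      intro s
      refine (lt_of_le_of_lt (measure_mono (fun x hx => hx.1)) ?_).ne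
      rw [Real.volume_Icc]; exact ENNReal.ofReal_lt_top
    have h1 : (∫⁻ x in Ioo (0:ℝ) 1, νb x ^ (3:ℝ)) ≤ ∫⁻ x in Ioi 0, νb x ^ (3:ℝ) :=
      lintegral_mono_set (fun x hx => hx.1)
    have h2 : (∫⁻ x in Ioi (0:ℝ), νb x ^ (3:ℝ))
        = ∫⁻ x in Ioi (0:ℝ), ENNReal.ofReal ((νb x).toReal ^ (3:ℝ)) := by
      refine setLIntegral_congr_fun_ae measurableSet_Ioi (ae_of_all _ fun x hx => ?_)
      rw [← ENNReal.ofReal_rpow_of_nonneg ENNReal.toReal_nonneg (by norm_num : (0:ℝ) ≤ 3),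
        ENNReal.ofReal_toReal (hνb_ne_top x hx)]
    have h3 : (∫⁻ x in Ioi (0:ℝ), ENNReal.ofReal ((νb x).toReal ^ (3:ℝ)))
        = ENNReal.ofReal 3 * ∫⁻ s in Ioi (0:ℝ),
            (volume.restrict (Ioi 0)) {x | s < (νb x).toReal} * ENNReal.ofReal (s ^ ((3:ℝ) - 1)) :=
      lintegral_rpow_eq_lintegral_meas_lt_mul _ (ae_of_all _ fun x => ENNReal.toReal_nonneg)
        hνb_meas.ennreal_toReal.aemeasurable (by norm_num)
    have h4 : ∀ s : ℝ, s ∈ Ioi (0:ℝ) →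
        (volume.restrict (Ioi 0)) {x | s < (νb x).toReal} ≤ mb s := by
      intro s hs
      rw [Measure.restrict_apply' measurableSet_Ioi]
      have hsub : {x : ℝ | s < (νb x).toReal} ∩ Ioi 0 ⊆ Ioo 0 ((mb s).toReal) := by
        rintro x ⟨hxs, hx0⟩
        refine ⟨hx0, ?_⟩
        have hν : ENNReal.ofReal s < νb x :=
          (ENNReal.ofReal_lt_iff_lt_toReal (le_of_lt hs) (hνb_ne_top x hx0)).2 hxs
        have hex : ∃ t, t ∈ {t ∈ Ioi (0:ℝ) | ENNReal.ofReal x < μb t} ∧ s < t := by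
          by_contra hc
          push_neg at hc
          have hsub2 : {t ∈ Ioi (0:ℝ) | ENNReal.ofReal x < μb t} ⊆ Ioc 0 s :=
            fun t ht => ⟨ht.1, hc t ht⟩
          have hle : νb x ≤ volume (Ioc (0:ℝ) s) := measure_mono hsub2
          rw [Real.volume_Ioc, sub_zero] at hle
          exact absurd (lt_of_lt_of_le hν hle) (lt_irrefl _)
        obtain ⟨t, ht, hst⟩ := hex
        have hμm : μb t ≤ mb s :=
          measure_mono (fun y hy => ⟨hy.1, lt_of_lt_of_le hst hy.2⟩)
        exact (ENNReal.ofReal_lt_iff_lt_toReal hx0.le (hmb_ne_top s)).1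
          (lt_of_lt_of_le ht.2 hμm)
      calc volume ({x : ℝ | s < (νb x).toReal} ∩ Ioi 0)
          ≤ volume (Ioo 0 ((mb s).toReal)) := measure_mono hsub
        _ ≤ mb s := by
            rw [Real.volume_Ioo, sub_zero]
            exact ENNReal.ofReal_toReal_le
    have h5 : ENNReal.ofReal 3 * (∫⁻ s in Ioi (0:ℝ),
          (volume.restrict (Ioi 0)) {x | s < (νb x).toReal} * ENNReal.ofReal (s ^ ((3:ℝ) - 1)))
        ≤ ENNReal.ofReal 3 * ∫⁻ s in Ioi (0:ℝ), mb s * ENNReal.ofReal (s ^ ((3:ℝ) - 1)) := by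
      refine mul_le_mul_right ?_ _
      refine setLIntegral_mono (by fun_prop) fun s hs => ?_
      exact mul_le_mul_left (h4 s hs) _
    have h6 : ENNReal.ofReal 3 * (∫⁻ s in Ioi (0:ℝ), mb s * ENNReal.ofReal (s ^ ((3:ℝ) - 1)))
        = Ib := by
      have hlc := lintegral_rpow_eq_lintegral_meas_lt_mul (volume.restrict (Icc (0:ℝ) 1))
        (ae_of_all _ hf0) hf_aem (by norm_num : (0:ℝ) < 3)
      rw [hIb_def]
      rw [hlc]
      congr 1
      refine setLIntegral_congr_fun_ae measurableSet_Ioi (ae_of_all _ fun s hs => ?_)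
      congr 1
      rw [Measure.restrict_apply' measurableSet_Icc]
      refine congrArg volume ?_
      ext y
      simp only [mem_sep_iff, mem_inter_iff, mem_setOf_eq]
      tauto
    calc (∫⁻ x in Ioo (0:ℝ) 1, νb x ^ (3:ℝ)) ≤ ∫⁻ x in Ioi 0, νb x ^ (3:ℝ) := h1
      _ = ∫⁻ x in Ioi (0:ℝ), ENNReal.ofReal ((νb x).toReal ^ (3:ℝ)) := h2
      _ = ENNReal.ofReal 3 * ∫⁻ s in Ioi (0:ℝ),
            (volume.restrict (Ioi 0)) {x | s < (νb x).toReal} * ENNReal.ofReal (s ^ ((3:ℝ) - 1)) := h3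
      _ ≤ ENNReal.ofReal 3 * ∫⁻ s in Ioi (0:ℝ), mb s * ENNReal.ofReal (s ^ ((3:ℝ) - 1)) := h5
      _ = Ib := h6
  -- wrap up
  set N := eLpNorm f 3 (volume.restrict (Icc (0:ℝ) 1)) with hN_def
  have hN_ne_top : N ≠ ∞ := hf.2.ne
  have hN_eq : N = Ib ^ ((1:ℝ)/3) := by
    rw [hN_def, eLpNorm_eq_lintegral_rpow_enorm_toReal (by norm_num) (by norm_num), hIb_eq]
    norm_num
  set L := ∫⁻ t in Ioi (0:ℝ), (μb t) ^ ((1:ℝ)/2) with hL_def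
  have hL_le : L ≤ ENNReal.ofReal ((2:ℝ) ^ ((1:ℝ)/3)) * N := by
    calc L = ∫⁻ x in Ioo (0:ℝ) 1, ENNReal.ofReal ((2 * Real.sqrt x)⁻¹) * νb x := by
            rw [step2, step3]
      _ ≤ (∫⁻ x in Ioo (0:ℝ) 1, ENNReal.ofReal ((2 * Real.sqrt x)⁻¹) ^ ((3:ℝ)/2)) ^ ((2:ℝ)/3) *
          (∫⁻ x in Ioo (0:ℝ) 1, νb x ^ (3:ℝ)) ^ ((1:ℝ)/3) := step4
      _ ≤ (ENNReal.ofReal (Real.sqrt 2)) ^ ((2:ℝ)/3) * Ib ^ ((1:ℝ)/3) := by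
          rw [step5]
          exact mul_le_mul_right (ENNReal.rpow_le_rpow step6 (by norm_num)) _
      _ = ENNReal.ofReal ((2:ℝ) ^ ((1:ℝ)/3)) * N := by
          rw [hN_eq]
          congr 1
          rw [ENNReal.ofReal_rpow_of_nonneg (Real.sqrt_nonneg 2) (by norm_num : (0:ℝ) ≤ 2/3)]
          congr 1
          rw [Real.sqrt_eq_rpow, ← Real.rpow_mul (by norm_num)]
          norm_num
  have hK : (∫ t in Ioi (0:ℝ), Real.sqrt ((μb t).toReal)) = L.toReal := by
    have hfin : ∀ᵐ t ∂(volume.restrict (Ioi (0:ℝ))), (μb t) ^ ((1:ℝ)/2) < ∞ :=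
      ae_of_all _ fun t => ENNReal.rpow_lt_top_of_nonneg (by norm_num) (hμb_ne_top t)
    have hmeas : AEMeasurable (fun t => (μb t) ^ ((1:ℝ)/2)) (volume.restrict (Ioi (0:ℝ))) :=
      (ENNReal.continuous_rpow_const.measurable.comp hμb_meas).aemeasurable
    rw [hL_def, ← integral_toReal hmeas hfin]
    refine integral_congr_ae (ae_of_all _ fun t => ?_)
    show Real.sqrt ((μb t).toReal) = ((μb t) ^ ((1:ℝ)/2)).toReal
    rw [Real.sqrt_eq_rpow, ENNReal.toReal_rpow]
  rw [hK]
  have hRHS_ne_top : ENNReal.ofReal ((2:ℝ) ^ ((1:ℝ)/3)) * N ≠ ∞ :=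
    ENNReal.mul_ne_top ENNReal.ofReal_ne_top hN_ne_top
  have hfinal := ENNReal.toReal_mono hRHS_ne_top hL_le
  rw [ENNReal.toReal_mul, ENNReal.toReal_ofReal (by positivity)] at hfinal
  have hlp : lpNorm1 f 3 = N.toReal := by
    rw [lpNorm1, hN_def]
    norm_num
  rw [hlp]
  exact hfinal
end

section
/- The functional K(f) := ∫_0^∞ √(λ{x : |f(x)| ≥ t}) dt defines a norm on L^p([0,1]) for every p > 2 (it is finite, positive-definite, homogeneous, and satisfies the triangle inequality). -/
open MeasureTheory Set
open scoped ENNReal NNReal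

/-- The functional `K(f) = ∫₀^∞ √(λ{x ∈ [0,1] : |f(x)| ≥ t}) dt`. -/
noncomputable def Kfun (f : ℝ → ℝ) : ℝ :=
  ∫ t in Ioi (0:ℝ), Real.sqrt ((volume {x ∈ Icc (0:ℝ) 1 | t ≤ |f x|}).toReal)

namespace KAux

/-- distribution function -/
noncomputable def D (f : ℝ → ℝ) (t : ℝ) : ℝ≥0∞ :=
  volume {x ∈ Icc (0:ℝ) 1 | t ≤ |f x|}

lemma Kfun_eq (f : ℝ → ℝ) :
    Kfun f = ∫ t in Ioi (0:ℝ), Real.sqrt ((D f t).toReal) := rfl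

lemma D_eq (f : ℝ → ℝ) (t : ℝ) :
    D f t = (volume.restrict (Icc (0:ℝ) 1)) {x | t ≤ |f x|} := by
  rw [Measure.restrict_apply' measurableSet_Icc]
  unfold D
  apply congrArg
  ext x
  simp only [D, mem_setOf_eq, mem_inter_iff]
  tauto

lemma D_anti (f : ℝ → ℝ) : Antitone (D f) := fun s t hst =>
  measure_mono (fun x hx => ⟨hx.1, hst.trans hx.2⟩)

lemma D_meas (f : ℝ → ℝ) : Measurable (D f) := (D_anti f).measurable

lemma D_le_one (f : ℝ → ℝ) (t : ℝ) : D f t ≤ 1 := by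
  have h : D f t ≤ volume (Icc (0:ℝ) 1) := measure_mono (fun x hx => hx.1)
  simpa using h

lemma D_ne_top (f : ℝ → ℝ) (t : ℝ) : D f t ≠ ∞ :=
  ((D_le_one f t).trans_lt ENNReal.one_lt_top).ne

/-- the `√` kernel representation -/
lemma sqrt_repr {a : ℝ≥0∞} (ha : a ≠ ∞) :
    ∫⁻ s in Ioi (0:ℝ), min (ENNReal.ofReal (s ^ (-2:ℝ)) * a) 1
      = 2 * a ^ (1/2 : ℝ) := by
  rcases eq_or_ne a 0 with rfl | ha0
  · simp [ENNReal.zero_rpow_of_pos (by norm_num : (0:ℝ) < 1/2)]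
  · set α := a.toReal with hα
    have hαpos : 0 < α := ENNReal.toReal_pos ha0 ha
    have haof : a = ENNReal.ofReal α := (ENNReal.ofReal_toReal ha).symm
    set r := Real.sqrt α with hr
    have hrpos : 0 < r := Real.sqrt_pos.mpr hαpos
    have hsq : r ^ (2:ℕ) = α := Real.sq_sqrt hαpos.le
    have hsplit : Ioc (0:ℝ) r ∪ Ioi r = Ioi 0 := Ioc_union_Ioi_eq_Ioi hrpos.le
    have hdisj : Disjoint (Ioc (0:ℝ) r) (Ioi r) :=
      disjoint_left.mpr (fun x hx hx' => absurd hx.2 (not_le.mpr hx'))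
    have key : ∀ s : ℝ, 0 < s →
        (ENNReal.ofReal (s ^ (-2:ℝ)) * a = ENNReal.ofReal (α * s ^ (-2:ℝ)) ∧
          (s ≤ r → 1 ≤ ENNReal.ofReal (s ^ (-2:ℝ)) * a) ∧
          (r ≤ s → ENNReal.ofReal (s ^ (-2:ℝ)) * a ≤ 1)) := by
      intro s hs
      have hsne : s ^ (-2:ℝ) = (s ^ (2:ℕ))⁻¹ := by
        rw [← Real.rpow_natCast s 2, ← Real.rpow_neg hs.le]
        norm_num
      have heq : ENNReal.ofReal (s ^ (-2:ℝ)) * a = ENNReal.ofReal (α * s ^ (-2:ℝ)) := by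
        rw [haof, ← ENNReal.ofReal_mul (by positivity), mul_comm]
      refine ⟨heq, ?_, ?_⟩
      · intro hsr
        rw [heq]
        rw [ENNReal.one_le_ofReal, hsne, le_mul_inv_iff₀ (by positivity), one_mul]
        calc s ^ (2:ℕ) ≤ r ^ (2:ℕ) := by
              exact pow_le_pow_left₀ hs.le hsr 2
          _ = α := hsq
      · intro hrs
        rw [heq]
        rw [ENNReal.ofReal_le_one, hsne, mul_inv_le_iff₀ (by positivity), one_mul]
        calc α = r ^ (2:ℕ) := hsq.symm
          _ ≤ s ^ (2:ℕ) := by exact pow_le_pow_left₀ hrpos.le hrs 2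
    rw [← hsplit, lintegral_union measurableSet_Ioi hdisj]
    have h1 : ∫⁻ s in Ioc (0:ℝ) r, min (ENNReal.ofReal (s ^ (-2:ℝ)) * a) 1
        = ENNReal.ofReal r := by
      rw [setLIntegral_congr_fun_ae measurableSet_Ioc
        (Filter.Eventually.of_forall
          (fun s hs => min_eq_right ((key s hs.1).2.1 hs.2)))]
      simp [Real.volume_Ioc]
    have h2 : ∫⁻ s in Ioi r, min (ENNReal.ofReal (s ^ (-2:ℝ)) * a) 1
        = ENNReal.ofReal r := by
      rw [setLIntegral_congr_fun_ae measurableSet_Ioi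
        (Filter.Eventually.of_forall
          (fun s hs => by
            rw [min_eq_left ((key s (hrpos.trans hs)).2.2 (le_of_lt hs)),
              (key s (hrpos.trans hs)).1]))]
      have hint : IntegrableOn (fun s : ℝ => α * s ^ (-2:ℝ)) (Ioi r) := by
        exact (integrableOn_Ioi_rpow_of_lt (by norm_num) hrpos).const_mul α
      rw [← ofReal_integral_eq_lintegral_ofReal hint
        ((ae_restrict_iff' measurableSet_Ioi).mpr (Filter.Eventually.of_forall
          (fun s hs => by
            have : (0:ℝ) < s := hrpos.trans hs
            positivity)))]
      · congr 1
        rw [integral_const_mul, integral_Ioi_rpow_of_lt (by norm_num) hrpos]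
        have : -r ^ (-2 + 1 : ℝ) / (-2 + 1) = r⁻¹ := by
          norm_num
          rw [Real.rpow_neg_one]
        rw [this]
        field_simp
        rw [← hsq]
    rw [h1, h2, haof]
    rw [ENNReal.ofReal_rpow_of_pos hαpos]
    rw [← Real.sqrt_eq_rpow]
    ring

/-- translation invariance for set lintegral on `Ioi` -/
lemma lint_shift (F : ℝ → ℝ≥0∞) (a : ℝ) :
    ∫⁻ t in Ioi a, F t = ∫⁻ t in Ioi (0:ℝ), F (t + a) := by
  rw [← lintegral_indicator measurableSet_Ioi, ← lintegral_indicator measurableSet_Ioi]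
  rw [← lintegral_add_right_eq_self (fun t => (Ioi a).indicator F t) a]
  congr 1
  funext t
  simp [Set.indicator_apply, mem_Ioi, lt_add_iff_pos_left]

/-- layer cake -/
lemma layer (f : ℝ → ℝ) (hfm : AEMeasurable f (volume.restrict (Icc (0:ℝ) 1)))
    (a : ℝ) :
    ∫⁻ t in Ioi a, D f t
      = ∫⁻ x in Icc (0:ℝ) 1, ENNReal.ofReal (|f x| - a) := by
  set μ := volume.restrict (Icc (0:ℝ) 1) with hμ
  have h1 : ∫⁻ x, ENNReal.ofReal (max (|f x| - a) 0) ∂μ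
      = ∫⁻ t in Ioi (0:ℝ), μ {x | t ≤ max (|f x| - a) 0} :=
    lintegral_eq_lintegral_meas_le μ
      (Filter.Eventually.of_forall (fun x => le_max_right _ _))
      ((((continuous_abs.measurable.comp_aemeasurable hfm).sub aemeasurable_const).max aemeasurable_const))
  have h2 : ∀ x, ENNReal.ofReal (max (|f x| - a) 0) = ENNReal.ofReal (|f x| - a) := by
    intro x
    rcases le_total (|f x| - a) 0 with h | h
    · rw [max_eq_right h, ENNReal.ofReal_of_nonpos h, ENNReal.ofReal_zero]
    · rw [max_eq_left h]
  have h3 : ∀ t ∈ Ioi (0:ℝ), μ {x | t ≤ max (|f x| - a) 0} = D f (t + a) := by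
    intro t ht
    rw [D_eq]
    congr 1
    ext x
    simp only [mem_setOf_eq, le_max_iff]
    constructor
    · rintro (h | h)
      · linarith
      · exact absurd (lt_of_lt_of_le ht h) (lt_irrefl _)
    · intro h; left; linarith
  rw [lint_shift (D f) a]
  simp_rw [← h2]
  rw [h1]
  exact (setLIntegral_congr_fun_ae measurableSet_Ioi
    (Filter.Eventually.of_forall h3)).symm

/-- the auxiliary functional -/
noncomputable def Psi (c : ℝ≥0∞) (f : ℝ → ℝ) : ℝ≥0∞ :=
  ∫⁻ t in Ioi (0:ℝ), min (c * D f t) 1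

lemma Psi_le (c : ℝ≥0∞) (f : ℝ → ℝ) {a : ℝ} (ha : 0 ≤ a) :
    Psi c f ≤ ENNReal.ofReal a + c * ∫⁻ t in Ioi a, D f t := by
  have hsplit : Ioi (0:ℝ) = Ioc 0 a ∪ Ioi a := (Ioc_union_Ioi_eq_Ioi ha).symm
  have hdisj : Disjoint (Ioc (0:ℝ) a) (Ioi a) :=
    disjoint_left.mpr (fun x hx hx' => absurd hx.2 (not_le.mpr hx'))
  rw [Psi, hsplit, lintegral_union measurableSet_Ioi hdisj]
  refine add_le_add ?_ ?_
  · calc ∫⁻ t in Ioc (0:ℝ) a, min (c * D f t) 1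
        ≤ ∫⁻ _ in Ioc (0:ℝ) a, 1 := lintegral_mono (fun t => min_le_right _ _)
      _ = ENNReal.ofReal a := by simp [Real.volume_Ioc]
  · calc ∫⁻ t in Ioi a, min (c * D f t) 1
        ≤ ∫⁻ t in Ioi a, c * D f t := lintegral_mono (fun t => min_le_left _ _)
      _ = c * ∫⁻ t in Ioi a, D f t := lintegral_const_mul c (D_meas f)

lemma Psi_ge (c : ℝ≥0∞) (f : ℝ → ℝ) :
    ∃ a : ℝ, 0 ≤ a ∧ ENNReal.ofReal a + c * ∫⁻ t in Ioi a, D f t ≤ Psi c f := by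
  by_cases hS : ∃ t : ℝ, 0 < t ∧ c * D f t ≤ 1
  · set S := {t : ℝ | 0 < t ∧ c * D f t ≤ 1} with hSdef
    obtain ⟨t0, ht0, hct0⟩ := hS
    have hne : S.Nonempty := ⟨t0, ht0, hct0⟩
    have hbdd : BddBelow S := ⟨0, fun x hx => hx.1.le⟩
    set a := sInf S with hadef
    have ha0 : 0 ≤ a := le_csInf hne (fun t ht => ht.1.le)
    refine ⟨a, ha0, ?_⟩
    have key1 : ∀ t, a < t → c * D f t ≤ 1 := by
      intro t hat
      obtain ⟨t', ht'S, ht'⟩ := (csInf_lt_iff hbdd hne).mp hat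
      calc c * D f t ≤ c * D f t' := mul_le_mul_right (D_anti f ht'.le) c
        _ ≤ 1 := ht'S.2
    have key2 : ∀ t, 0 < t → t < a → 1 ≤ c * D f t := by
      intro t ht hta
      by_contra h
      exact absurd (csInf_le hbdd ⟨ht, (not_le.mp h).le⟩) (not_le.mpr hta)
    have hdisj : Disjoint (Ioo (0:ℝ) a) (Ioi a) :=
      disjoint_left.mpr (fun x hx hx' => absurd hx.2 (not_lt.mpr hx'.le))
    have hsub : Ioo (0:ℝ) a ∪ Ioi a ⊆ Ioi 0 := by
      rintro x (hx | hx)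
      · exact hx.1
      · exact lt_of_le_of_lt ha0 hx
    have hIoo : ∫⁻ t in Ioo (0:ℝ) a, min (c * D f t) 1 = ENNReal.ofReal a := by
      rw [setLIntegral_congr_fun_ae measurableSet_Ioo
        (Filter.Eventually.of_forall (fun t ht => min_eq_right (key2 t ht.1 ht.2)))]
      simp [Real.volume_Ioo]
    have hIoi : ∫⁻ t in Ioi a, min (c * D f t) 1 = c * ∫⁻ t in Ioi a, D f t := by
      rw [setLIntegral_congr_fun_ae measurableSet_Ioi
        (Filter.Eventually.of_forall (fun t ht => min_eq_left (key1 t ht)))]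
      exact lintegral_const_mul c (D_meas f)
    calc ENNReal.ofReal a + c * ∫⁻ t in Ioi a, D f t
        = ∫⁻ t in Ioo (0:ℝ) a ∪ Ioi a, min (c * D f t) 1 := by
          rw [lintegral_union measurableSet_Ioi hdisj, hIoo, hIoi]
      _ ≤ Psi c f := lintegral_mono_set hsub
  · refine ⟨0, le_refl 0, ?_⟩
    push_neg at hS
    have : Psi c f = ∫⁻ _ in Ioi (0:ℝ), 1 := by
      refine setLIntegral_congr_fun_ae measurableSet_Ioi
        (Filter.Eventually.of_forall (fun t ht => min_eq_right (hS t ht).le))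
    rw [this]
    simp [Real.volume_Ioi]

lemma Psi_add (c : ℝ≥0∞) (f g : ℝ → ℝ)
    (hfm : AEMeasurable f (volume.restrict (Icc (0:ℝ) 1)))
    (hgm : AEMeasurable g (volume.restrict (Icc (0:ℝ) 1))) :
    Psi c (fun x => f x + g x) ≤ Psi c f + Psi c g := by
  have habs : AEMeasurable (fun x => |f x|) (volume.restrict (Icc (0:ℝ) 1)) :=
    continuous_abs.measurable.comp_aemeasurable hfm
  obtain ⟨a, ha, hA⟩ := Psi_ge c f
  obtain ⟨b, hb, hB⟩ := Psi_ge c g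
  calc Psi c (fun x => f x + g x)
      ≤ ENNReal.ofReal (a + b)
          + c * ∫⁻ t in Ioi (a + b), D (fun x => f x + g x) t :=
        Psi_le c _ (add_nonneg ha hb)
    _ = ENNReal.ofReal (a + b)
          + c * ∫⁻ x in Icc (0:ℝ) 1, ENNReal.ofReal (|f x + g x| - (a + b)) := by
        rw [layer (fun x => f x + g x) (hfm.add hgm) (a + b)]
    _ ≤ ENNReal.ofReal (a + b)
          + c * ∫⁻ x in Icc (0:ℝ) 1,
              (ENNReal.ofReal (|f x| - a) + ENNReal.ofReal (|g x| - b)) := by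
        gcongr with x
        calc ENNReal.ofReal (|f x + g x| - (a + b))
            ≤ ENNReal.ofReal ((|f x| - a) + (|g x| - b)) := by
              refine ENNReal.ofReal_le_ofReal ?_
              have := abs_add_le (f x) (g x)
              linarith
          _ ≤ ENNReal.ofReal (|f x| - a) + ENNReal.ofReal (|g x| - b) :=
              ENNReal.ofReal_add_le
    _ = (ENNReal.ofReal a + c * ∫⁻ x in Icc (0:ℝ) 1, ENNReal.ofReal (|f x| - a))
          + (ENNReal.ofReal b + c * ∫⁻ x in Icc (0:ℝ) 1, ENNReal.ofReal (|g x| - b)) := by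
        rw [lintegral_add_left' (f := fun x => ENNReal.ofReal (|f x| - a)) ((habs.sub aemeasurable_const).ennreal_ofReal) _,
          ENNReal.ofReal_add ha hb]
        ring
    _ = (ENNReal.ofReal a + c * ∫⁻ t in Ioi a, D f t)
          + (ENNReal.ofReal b + c * ∫⁻ t in Ioi b, D g t) := by
        rw [layer f hfm a, layer g hgm b]
    _ ≤ Psi c f + Psi c g := add_le_add hA hB


/-- the `L`-version of `Kfun` -/
noncomputable def Kl (f : ℝ → ℝ) : ℝ≥0∞ :=
  ∫⁻ t in Ioi (0:ℝ), (D f t) ^ (1/2 : ℝ)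

lemma kernel_meas (f : ℝ → ℝ) :
    Measurable (fun q : ℝ × ℝ =>
      min (ENNReal.ofReal (q.2 ^ (-2:ℝ)) * D f q.1) 1) := by
  refine Measurable.min ?_ measurable_const
  exact (ENNReal.measurable_ofReal.comp
    (measurable_snd.pow_const (-2:ℝ))).mul ((D_meas f).comp measurable_fst)

lemma Kl_repr (f : ℝ → ℝ) :
    2 * Kl f = ∫⁻ s in Ioi (0:ℝ), Psi (ENNReal.ofReal (s ^ (-2:ℝ))) f := by
  calc 2 * Kl f = ∫⁻ t in Ioi (0:ℝ), 2 * (D f t) ^ (1/2 : ℝ) :=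
        (lintegral_const_mul' 2 _ (by norm_num)).symm
    _ = ∫⁻ t in Ioi (0:ℝ), ∫⁻ s in Ioi (0:ℝ),
          min (ENNReal.ofReal (s ^ (-2:ℝ)) * D f t) 1 := by
        refine (setLIntegral_congr_fun_ae measurableSet_Ioi
          (Filter.Eventually.of_forall (fun t _ => ?_))).symm
        exact sqrt_repr (D_ne_top f t)
    _ = ∫⁻ s in Ioi (0:ℝ), ∫⁻ t in Ioi (0:ℝ),
          min (ENNReal.ofReal (s ^ (-2:ℝ)) * D f t) 1 := by
        apply lintegral_lintegral_swap
        exact (kernel_meas f).aemeasurable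
    _ = ∫⁻ s in Ioi (0:ℝ), Psi (ENNReal.ofReal (s ^ (-2:ℝ))) f := rfl

lemma Kl_add (f g : ℝ → ℝ)
    (hfm : AEMeasurable f (volume.restrict (Icc (0:ℝ) 1)))
    (hgm : AEMeasurable g (volume.restrict (Icc (0:ℝ) 1))) :
    Kl (fun x => f x + g x) ≤ Kl f + Kl g := by
  rw [← ENNReal.mul_le_mul_iff_right (by norm_num : (2:ℝ≥0∞) ≠ 0) (by norm_num), mul_add]
  rw [Kl_repr, Kl_repr, Kl_repr]
  have hk : Measurable (Function.uncurry fun (s t : ℝ) =>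
      min (ENNReal.ofReal (s ^ (-2:ℝ)) * D f t) 1) :=
    (kernel_meas f).comp measurable_swap
  have hmf : Measurable fun s : ℝ => Psi (ENNReal.ofReal (s ^ (-2:ℝ))) f :=
    Measurable.lintegral_prod_right hk
  calc ∫⁻ s in Ioi (0:ℝ), Psi (ENNReal.ofReal (s ^ (-2:ℝ))) (fun x => f x + g x)
      ≤ ∫⁻ s in Ioi (0:ℝ), (Psi (ENNReal.ofReal (s ^ (-2:ℝ))) f
          + Psi (ENNReal.ofReal (s ^ (-2:ℝ))) g) :=
        lintegral_mono (fun s => Psi_add _ f g hfm hgm)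
    _ = _ := lintegral_add_left hmf _

lemma Kl_lt_top (p : ℝ) (hp : 2 < p) (f : ℝ → ℝ)
    (hf : MemLp f (ENNReal.ofReal p) (volume.restrict (Icc 0 1))) :
    Kl f < ∞ := by
  have hp0 : 0 < p := by linarith
  set μ := volume.restrict (Icc (0:ℝ) 1) with hμ
  set S := eLpNorm f (ENNReal.ofReal p) μ with hS
  have hSne : S ≠ ∞ := hf.2.ne
  have cheb : ∀ t : ℝ, 1 ≤ t →
      (D f t) ^ (1/2:ℝ) ≤ S ^ (p/2) * ENNReal.ofReal (t ^ (-(p/2))) := by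
    intro t ht
    have ht0 : 0 < t := lt_of_lt_of_le one_pos ht
    have hset : {x : ℝ | t ≤ |f x|} = {x : ℝ | ENNReal.ofReal t ≤ ‖f x‖ₑ} := by
      ext x
      rw [mem_setOf_eq, mem_setOf_eq, Real.enorm_eq_ofReal_abs,
        ENNReal.ofReal_le_ofReal_iff (abs_nonneg _)]
    have h1 : D f t ≤ (ENNReal.ofReal t)⁻¹ ^ p * S ^ p := by
      rw [D_eq, hset]
      have := meas_ge_le_mul_pow_eLpNorm_enorm μ
        (p := ENNReal.ofReal p)
        (ENNReal.ofReal_pos.mpr hp0).ne'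
        ENNReal.ofReal_ne_top hf.1
        (ENNReal.ofReal_pos.mpr ht0).ne'
        (fun h => absurd h ENNReal.ofReal_ne_top)
      rwa [ENNReal.toReal_ofReal hp0.le] at this
    calc (D f t) ^ (1/2:ℝ)
        ≤ ((ENNReal.ofReal t)⁻¹ ^ p * S ^ p) ^ (1/2:ℝ) :=
          ENNReal.rpow_le_rpow h1 (by norm_num)
      _ = (ENNReal.ofReal t)⁻¹ ^ (p/2) * S ^ (p/2) := by
          rw [ENNReal.mul_rpow_of_nonneg _ _ (by norm_num : (0:ℝ) ≤ 1/2),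
            ← ENNReal.rpow_mul, ← ENNReal.rpow_mul, mul_one_div]
      _ = S ^ (p/2) * ENNReal.ofReal (t ^ (-(p/2))) := by
          rw [mul_comm, ENNReal.inv_rpow, ← ENNReal.rpow_neg,
            ENNReal.ofReal_rpow_of_pos ht0]
  have hsplit : Ioi (0:ℝ) = Ioc 0 1 ∪ Ioi 1 := (Ioc_union_Ioi_eq_Ioi zero_le_one).symm
  have hdisj : Disjoint (Ioc (0:ℝ) 1) (Ioi 1) :=
    disjoint_left.mpr (fun x hx hx' => absurd hx.2 (not_le.mpr hx'))
  rw [Kl, hsplit, lintegral_union measurableSet_Ioi hdisj]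
  refine ENNReal.add_lt_top.mpr ⟨?_, ?_⟩
  · calc ∫⁻ t in Ioc (0:ℝ) 1, (D f t) ^ (1/2:ℝ)
        ≤ ∫⁻ _ in Ioc (0:ℝ) 1, 1 :=
          lintegral_mono (fun t => ENNReal.rpow_le_one (D_le_one f t) (by norm_num))
      _ = 1 := by simp [Real.volume_Ioc]
      _ < ∞ := ENNReal.one_lt_top
  · have hr : -(p/2) < -1 := by linarith
    have hint : IntegrableOn (fun t : ℝ => t ^ (-(p/2))) (Ioi 1) :=
      integrableOn_Ioi_rpow_of_lt hr one_pos
    calc ∫⁻ t in Ioi (1:ℝ), (D f t) ^ (1/2:ℝ)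
        ≤ ∫⁻ t in Ioi (1:ℝ), S ^ (p/2) * ENNReal.ofReal (t ^ (-(p/2))) :=
          setLIntegral_mono' measurableSet_Ioi (fun t ht => cheb t ht.le)
      _ = S ^ (p/2) * ∫⁻ t in Ioi (1:ℝ), ENNReal.ofReal (t ^ (-(p/2))) :=
          lintegral_const_mul' _ _ (ENNReal.rpow_lt_top_of_nonneg (by positivity) hSne).ne
      _ < ∞ := ENNReal.mul_lt_top
          (ENNReal.rpow_lt_top_of_nonneg (by positivity) hSne)
          hint.lintegral_lt_top

lemma Kfun_toReal (f : ℝ → ℝ) : Kfun f = (Kl f).toReal := by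
  rw [Kfun_eq]
  have h : ∀ t : ℝ, Real.sqrt ((D f t).toReal) = ((D f t) ^ (1/2:ℝ)).toReal := by
    intro t
    rw [Real.sqrt_eq_rpow, ENNReal.toReal_rpow]
  simp_rw [h]
  exact integral_toReal ((D_meas f).pow_const _).aemeasurable
    (Filter.Eventually.of_forall
      (fun t => ENNReal.rpow_lt_top_of_nonneg (by norm_num) (D_ne_top f t)))

end KAux

/-- `K` is a norm on `L^p([0,1])` for `p > 2`: it is finite, positive definite,
absolutely homogeneous, and satisfies the triangle inequality. -/
theorem K_is_norm (p : ℝ) (hp : 2 < p) (f g : ℝ → ℝ)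
    (hf : MemLp f (ENNReal.ofReal p) (volume.restrict (Icc 0 1)))
    (hg : MemLp g (ENNReal.ofReal p) (volume.restrict (Icc 0 1))) :
    IntegrableOn (fun t => Real.sqrt ((volume {x ∈ Icc (0:ℝ) 1 | t ≤ |f x|}).toReal))
        (Ioi (0:ℝ)) ∧
      (Kfun f = 0 ↔ f =ᵐ[volume.restrict (Icc 0 1)] 0) ∧
      (∀ c : ℝ, Kfun (fun x => c * f x) = |c| * Kfun f) ∧
      Kfun (fun x => f x + g x) ≤ Kfun f + Kfun g := by
  open KAux in
  set μ := volume.restrict (Icc (0:ℝ) 1) with hμ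
  -- Part 1 : integrability
  have hfun : (fun t => Real.sqrt ((volume {x ∈ Icc (0:ℝ) 1 | t ≤ |f x|}).toReal))
      = fun t => ((D f t) ^ (1/2:ℝ)).toReal := by
    funext t
    rw [show volume {x ∈ Icc (0:ℝ) 1 | t ≤ |f x|} = D f t from rfl,
      Real.sqrt_eq_rpow, ENNReal.toReal_rpow]
  have h1 : IntegrableOn (fun t => ((D f t) ^ (1/2:ℝ)).toReal) (Ioi (0:ℝ)) :=
    integrable_toReal_of_lintegral_ne_top ((D_meas f).pow_const _).aemeasurable
      (Kl_lt_top p hp f hf).ne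
  have part1 : IntegrableOn
      (fun t => Real.sqrt ((volume {x ∈ Icc (0:ℝ) 1 | t ≤ |f x|}).toReal))
      (Ioi (0:ℝ)) := by rw [hfun]; exact h1
  refine ⟨part1, ⟨?_, ?_⟩, ?_, ?_⟩
  · -- Kfun f = 0 → f = 0 a.e.
    intro h0
    have hzero : (fun t => Real.sqrt ((D f t).toReal))
        =ᵐ[volume.restrict (Ioi (0:ℝ))] 0 := by
      refine (integral_eq_zero_iff_of_nonneg
        (fun t => Real.sqrt_nonneg _) ?_).mp ?_
      · exact part1
      · rw [← Kfun_eq]; exact h0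
    have hDzero : ∀ t : ℝ, 0 < t → D f t = 0 := by
      intro t ht
      by_contra hne
      have hsubset : Ioc (0:ℝ) t ⊆ {s | Real.sqrt ((D f s).toReal) ≠ 0} := by
        intro s hs
        have hD : D f t ≤ D f s := D_anti f hs.2
        have hpos : 0 < (D f s).toReal := by
          refine ENNReal.toReal_pos (fun h => hne ?_) (D_ne_top f s)
          exact le_antisymm (h ▸ hD) zero_le
        exact (Real.sqrt_pos.mpr hpos).ne'
      have hnull : (volume.restrict (Ioi (0:ℝ)))
          {s | Real.sqrt ((D f s).toReal) ≠ 0} = 0 := by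
        rw [Filter.EventuallyEq, ae_iff] at hzero
        simpa only [Pi.zero_apply] using hzero
      have hle : (volume.restrict (Ioi (0:ℝ))) (Ioc 0 t) = 0 :=
        measure_mono_null hsubset hnull
      rw [Measure.restrict_apply' measurableSet_Ioi,
        inter_eq_left.mpr (fun s hs => hs.1), Real.volume_Ioc] at hle
      rw [ENNReal.ofReal_eq_zero] at hle
      linarith
    have hmeas0 : μ {x | f x ≠ 0} = 0 := by
      have hsub : {x : ℝ | f x ≠ 0} ⊆ ⋃ n : ℕ, {x : ℝ | ((n:ℝ)+1)⁻¹ ≤ |f x|} := by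
        intro x hx
        obtain ⟨n, hn⟩ := exists_nat_one_div_lt (abs_pos.mpr hx)
        refine mem_iUnion.mpr ⟨n, ?_⟩
        rw [one_div] at hn
        exact hn.le
      refine measure_mono_null hsub (le_antisymm ?_ zero_le)
      calc μ (⋃ n : ℕ, {x : ℝ | ((n:ℝ)+1)⁻¹ ≤ |f x|})
          ≤ ∑' n : ℕ, μ {x : ℝ | ((n:ℝ)+1)⁻¹ ≤ |f x|} := measure_iUnion_le _
        _ = 0 := by
            have : ∀ n : ℕ, μ {x : ℝ | ((n:ℝ)+1)⁻¹ ≤ |f x|} = 0 := by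
              intro n
              rw [hμ, ← D_eq]
              exact hDzero _ (by positivity)
            simp [this]
    rw [Filter.EventuallyEq, ae_iff]
    simpa using hmeas0
  · -- f = 0 a.e. → Kfun f = 0
    intro hae
    have hmeas0 : μ {x | f x ≠ 0} = 0 := by
      rw [Filter.EventuallyEq, ae_iff] at hae
      simpa using hae
    rw [Kfun_eq]
    rw [setIntegral_congr_fun measurableSet_Ioi (fun t ht => ?_), integral_zero]
    have hD : D f t = 0 := by
      rw [D_eq, ← hμ]
      refine measure_mono_null (fun x hx => ?_) hmeas0
      intro hfx
      rw [mem_setOf_eq, hfx, abs_zero] at hx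
      exact absurd (lt_of_lt_of_le ht hx) (lt_irrefl _)
    rw [hD]
    simp
  · -- homogeneity
    intro c
    by_cases hc : c = 0
    · subst hc
      rw [abs_zero, zero_mul, Kfun_eq]
      rw [setIntegral_congr_fun measurableSet_Ioi (fun t ht => ?_), integral_zero]
      have hD : D (fun x => (0:ℝ) * f x) t = 0 := by
        have : {x ∈ Icc (0:ℝ) 1 | t ≤ |(0:ℝ) * f x|} = ∅ := by
          ext x
          simp only [zero_mul, abs_zero, mem_sep_iff, mem_empty_iff_false, iff_false,
            not_and]
          intro _
          exact not_le.mpr ht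
        rw [D, this, measure_empty]
      rw [hD]
      simp
    · have hca : 0 < |c| := abs_pos.mpr hc
      have hD : ∀ t, D (fun x => c * f x) t = D f (t * |c|⁻¹) := by
        intro t
        unfold D
        apply congrArg
        ext x
        refine and_congr_right (fun _ => ?_)
        rw [abs_mul, ← div_eq_mul_inv, div_le_iff₀ hca, mul_comm]
      rw [Kfun_eq]
      simp_rw [hD]
      have hcv := integral_comp_mul_right_Ioi
        (fun t => Real.sqrt ((D f t).toReal)) 0 (inv_pos.mpr hca)
      rw [zero_mul] at hcv
      rw [hcv, smul_eq_mul, inv_inv, ← Kfun_eq]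
  · -- triangle inequality
    have hKl_add := Kl_add f g hf.1.aemeasurable hg.1.aemeasurable
    have hfin_f : Kl f ≠ ∞ := (Kl_lt_top p hp f hf).ne
    have hfin_g : Kl g ≠ ∞ := (Kl_lt_top p hp g hg).ne
    rw [Kfun_toReal, Kfun_toReal, Kfun_toReal]
    calc (Kl (fun x => f x + g x)).toReal
        ≤ (Kl f + Kl g).toReal :=
          ENNReal.toReal_mono (by simp [ENNReal.add_ne_top, hfin_f, hfin_g]) hKl_add
      _ = (Kl f).toReal + (Kl g).toReal := ENNReal.toReal_add hfin_f hfin_g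
end

section
/- Let u, w ∈ L^l([0,1]^2) be symmetric, and let F be a simple graph with l ≥ 1 edges. Then |t(F,u) − t(F,w)| ≤ l ‖u−w‖_l max(‖u‖_l, ‖w‖_l)^{l−1}, where t(F,u) = ∫_{[0,1]^{V(F)}} ∏_{ij∈E(F)} u(x_i,x_j) dx. -/
open MeasureTheory Set
open scoped ENNReal NNReal

/-- The `L^p` norm of a function on `[0,1]²`. -/
noncomputable def lpNorm2 (u : ℝ × ℝ → ℝ) (p : ℝ) : ℝ :=
  (eLpNorm u (ENNReal.ofReal p) (volume.restrict (Icc 0 1 ×ˢ Icc 0 1))).toReal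

/-- Homomorphism density `t(F,u)` of a simple graph with vertex set `Fin k` and edge set
`E` (edges as ordered pairs `(i,j)` with `i < j`) in a kernel `u`. -/
noncomputable def homDensity (k : ℕ) (E : Finset (Fin k × Fin k)) (u : ℝ × ℝ → ℝ) : ℝ :=
  ∫ x : Fin k → ℝ, ∏ e ∈ E, u (x e.1, x e.2)
    ∂(Measure.pi fun _ : Fin k => volume.restrict (Icc 0 1))


/-- Telescoping identity for differences of products. -/
private lemma telescope_prod {M : Type*} [CommRing M] (a b : ℕ → M) (n : ℕ) :
    (∏ i ∈ Finset.range n, a i) - ∏ i ∈ Finset.range n, b i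
      = ∑ j ∈ Finset.range n, ∏ i ∈ Finset.range n,
          (if i < j then b i else if i = j then a i - b i else a i) := by
  induction n with
  | zero => simp
  | succ n ih =>
    rw [Finset.prod_range_succ, Finset.prod_range_succ, Finset.sum_range_succ]
    have h1 : ∏ i ∈ Finset.range (n+1),
          (if i < n then b i else if i = n then a i - b i else a i)
        = (∏ i ∈ Finset.range n, b i) * (a n - b n) := by
      rw [Finset.prod_range_succ, if_neg (lt_irrefl n), if_pos rfl]
      congr 1
      exact Finset.prod_congr rfl fun i hi => if_pos (Finset.mem_range.mp hi)
    have h2 : ∀ j ∈ Finset.range n,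
        ∏ i ∈ Finset.range (n+1), (if i < j then b i else if i = j then a i - b i else a i)
        = (∏ i ∈ Finset.range n, (if i < j then b i else if i = j then a i - b i else a i))
            * a n := by
      intro j hj
      have hj' := Finset.mem_range.mp hj
      rw [Finset.prod_range_succ, if_neg (by omega), if_neg (by omega)]
    rw [h1, Finset.sum_congr rfl h2, ← Finset.sum_mul, ← ih]
    ring

private lemma list_getD_prod {α M : Type*} [CommMonoid M] (L : List α) (d : α) (F : α → M) :
    ∏ j ∈ Finset.range L.length, F (L.getD j d) = (L.map F).prod := by
  induction L with
  | nil => simp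
  | cons a L ih =>
    rw [List.length_cons, Finset.prod_range_succ']
    simp only [List.getD_cons_succ, List.getD_cons_zero, ih, List.map_cons, List.prod_cons]
    exact mul_comm _ _

instance : IsProbabilityMeasure (volume.restrict (Icc (0:ℝ) 1)) :=
  ⟨by simp [Real.volume_Icc]⟩

private lemma measurePreserving_pair_eval {k : ℕ} (μ : Measure ℝ) [IsProbabilityMeasure μ]
    {i j : Fin k} (hij : i ≠ j) :
    MeasurePreserving (fun x : Fin k → ℝ => (x i, x j))
      (Measure.pi fun _ => μ) (μ.prod μ) := by
  have hm : Measurable fun x : Fin k → ℝ => (x i, x j) :=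
    (measurable_pi_apply i).prodMk (measurable_pi_apply j)
  refine ⟨hm, (Measure.prod_eq fun s t hs ht => ?_).symm⟩
  rw [Measure.map_apply hm (hs.prod ht)]
  have hpre : (fun x : Fin k → ℝ => (x i, x j)) ⁻¹' (s ×ˢ t)
      = Set.pi Set.univ (fun m => if m = i then s else if m = j then t else Set.univ) := by
    ext x
    simp only [Set.mem_preimage, Set.mem_prod, Set.mem_pi, Set.mem_univ, true_implies]
    constructor
    · rintro ⟨h1, h2⟩ m
      split_ifs with h h'
      · exact h ▸ h1
      · exact h' ▸ h2
      · trivial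
    · intro h
      refine ⟨?_, ?_⟩
      · have := h i; rwa [if_pos rfl] at this
      · have := h j; rwa [if_neg (Ne.symm hij), if_pos rfl] at this
  rw [hpre, Measure.pi_pi]
  have hout : ∀ m ∈ Finset.univ, m ∉ ({i, j} : Finset (Fin k)) →
      μ (if m = i then s else if m = j then t else Set.univ) = 1 := by
    intro m _ hm'
    simp only [Finset.mem_insert, Finset.mem_singleton, not_or] at hm'
    rw [if_neg hm'.1, if_neg hm'.2]
    exact measure_univ
  have hre : ∏ m : Fin k, μ (if m = i then s else if m = j then t else Set.univ)
      = ∏ m ∈ ({i, j} : Finset (Fin k)), μ (if m = i then s else if m = j then t else Set.univ) :=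
    (Finset.prod_subset (Finset.subset_univ _) hout).symm
  rw [hre, Finset.prod_pair hij, if_pos rfl, if_neg (Ne.symm hij), if_pos rfl]

private lemma lintegral_prod_enorm_le {α : Type*} [MeasurableSpace α] {μ : Measure α}
    {l : ℕ} (hl : l ≠ 0) {g : ℕ → α → ℝ}
    (hg : ∀ j ∈ Finset.range l, AEStronglyMeasurable (g j) μ) :
    ∫⁻ x, ∏ j ∈ Finset.range l, (‖g j x‖₊ : ℝ≥0∞) ∂μ
      ≤ ∏ j ∈ Finset.range l, eLpNorm (g j) l μ := by
  have hl' : (l : ℝ) ≠ 0 := Nat.cast_ne_zero.mpr hl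
  have key := ENNReal.lintegral_prod_norm_pow_le (μ := μ) (Finset.range l)
    (f := fun j x => (‖g j x‖₊ : ℝ≥0∞) ^ (l : ℝ))
    (fun j hj => ((hg j hj).enorm.pow_const _))
    (p := fun _ => 1 / (l : ℝ))
    (by rw [Finset.sum_const, Finset.card_range, nsmul_eq_mul, mul_one_div, div_self hl'])
    (fun i _ => by positivity)
  calc ∫⁻ x, ∏ j ∈ Finset.range l, (‖g j x‖₊ : ℝ≥0∞) ∂μ
      = ∫⁻ x, ∏ j ∈ Finset.range l, ((‖g j x‖₊ : ℝ≥0∞) ^ (l:ℝ)) ^ (1/(l:ℝ)) ∂μ := by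
        congr 1; funext x; refine Finset.prod_congr rfl fun j _ => ?_
        rw [← ENNReal.rpow_mul, mul_one_div, div_self hl', ENNReal.rpow_one]
    _ ≤ ∏ j ∈ Finset.range l, (∫⁻ x, (‖g j x‖₊ : ℝ≥0∞) ^ (l:ℝ) ∂μ) ^ (1/(l:ℝ)) := key
    _ = ∏ j ∈ Finset.range l, eLpNorm (g j) l μ := by
        refine Finset.prod_congr rfl fun j hj => ?_
        rw [eLpNorm_eq_lintegral_rpow_enorm_toReal (by exact_mod_cast hl) (by simp),
          ENNReal.toReal_natCast]
        rfl

private lemma integrable_prod_of_memLl {α : Type*} [MeasurableSpace α] {μ : Measure α}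
    {l : ℕ} (hl : l ≠ 0) {g : ℕ → α → ℝ}
    (hg : ∀ j ∈ Finset.range l, AEStronglyMeasurable (g j) μ)
    (hfin : ∀ j ∈ Finset.range l, eLpNorm (g j) l μ ≠ ⊤) :
    Integrable (fun x => ∏ j ∈ Finset.range l, g j x) μ := by
  refine ⟨Finset.aestronglyMeasurable_fun_prod _ hg, ?_⟩
  rw [hasFiniteIntegral_iff_norm]
  simp only [ofReal_norm]
  calc ∫⁻ x, (‖∏ j ∈ Finset.range l, g j x‖₊ : ℝ≥0∞) ∂μ
      = ∫⁻ x, ∏ j ∈ Finset.range l, (‖g j x‖₊ : ℝ≥0∞) ∂μ := by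
        congr 1; funext x; rw [nnnorm_prod]; push_cast; rfl
    _ ≤ ∏ j ∈ Finset.range l, eLpNorm (g j) l μ := lintegral_prod_enorm_le hl hg
    _ < ⊤ := ENNReal.prod_lt_top fun j hj => (hfin j hj).lt_top

private lemma abs_integral_prod_le {α : Type*} [MeasurableSpace α] {μ : Measure α}
    {l : ℕ} (hl : l ≠ 0) {g : ℕ → α → ℝ}
    (hg : ∀ j ∈ Finset.range l, AEStronglyMeasurable (g j) μ)
    (hfin : ∀ j ∈ Finset.range l, eLpNorm (g j) l μ ≠ ⊤) :
    |∫ x, ∏ j ∈ Finset.range l, g j x ∂μ|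
      ≤ ∏ j ∈ Finset.range l, (eLpNorm (g j) l μ).toReal := by
  have h1 := norm_integral_le_lintegral_norm (μ := μ) (fun x => ∏ j ∈ Finset.range l, g j x)
  simp only [ofReal_norm] at h1
  rw [Real.norm_eq_abs] at h1
  refine h1.trans ?_
  rw [← ENNReal.toReal_prod]
  refine ENNReal.toReal_mono (by rw [← lt_top_iff_ne_top]; exact ENNReal.prod_lt_top fun j hj => (hfin j hj).lt_top) ?_
  calc ∫⁻ x, (‖∏ j ∈ Finset.range l, g j x‖₊ : ℝ≥0∞) ∂μ
      = ∫⁻ x, ∏ j ∈ Finset.range l, (‖g j x‖₊ : ℝ≥0∞) ∂μ := by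
        congr 1; funext x; rw [nnnorm_prod]; push_cast; rfl
    _ ≤ _ := lintegral_prod_enorm_le hl hg

set_option maxHeartbeats 1000000 in
theorem counting_lemma_Lp (k l : ℕ) (hl : 1 ≤ l)
    (E : Finset (Fin k × Fin k)) (hE : ∀ e ∈ E, e.1 < e.2) (hcard : E.card = l)
    (u w : ℝ × ℝ → ℝ)
    (hu : MemLp u (l : ENNReal) (volume.restrict (Icc 0 1 ×ˢ Icc 0 1)))
    (hw : MemLp w (l : ENNReal) (volume.restrict (Icc 0 1 ×ˢ Icc 0 1)))
    (husym : ∀ x y : ℝ, u (x, y) = u (y, x))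
    (hwsym : ∀ x y : ℝ, w (x, y) = w (y, x)) :
    |homDensity k E u - homDensity k E w| ≤
      l * lpNorm2 (fun p => u p - w p) l * max (lpNorm2 u l) (lpNorm2 w l) ^ (l - 1) := by
  classical
  have hl0 : l ≠ 0 := by omega
  set μ2 : Measure (ℝ × ℝ) := volume.restrict (Icc 0 1 ×ˢ Icc 0 1) with hμ2def
  set π : Measure (Fin k → ℝ) := Measure.pi fun _ : Fin k => volume.restrict (Icc 0 1)
    with hπdef
  have hμ2eq : (volume.restrict (Icc (0:ℝ) 1)).prod (volume.restrict (Icc (0:ℝ) 1)) = μ2 := by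
    rw [hμ2def, Measure.prod_restrict, ← Measure.volume_eq_prod]
  have hud : MemLp (fun p => u p - w p) (l : ℝ≥0∞) μ2 := hu.sub hw
  -- enumeration of the edges
  have hEne : E.Nonempty := Finset.card_pos.mp (by omega)
  obtain ⟨e₀, he₀⟩ := hEne
  set L : List (Fin k × Fin k) := E.toList with hLdef
  have hLlen : L.length = l := by rw [hLdef, Finset.length_toList, hcard]
  set ed : ℕ → Fin k × Fin k := fun j => L.getD j e₀ with heddef
  have hedmem : ∀ j, j < l → ed j ∈ E := by
    intro j hj
    have hj' : j < L.length := by omega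
    rw [heddef]
    simp only
    rw [List.getD_eq_getElem L e₀ hj']
    exact Finset.mem_toList.mp (L.getElem_mem hj')
  have hprod : ∀ F : Fin k × Fin k → ℝ, ∏ e ∈ E, F e = ∏ j ∈ Finset.range l, F (ed j) := by
    intro F
    rw [← Finset.prod_map_toList, ← list_getD_prod L e₀ F, hLlen]
  -- the coordinate-pair maps are measure preserving
  have hT : ∀ j, j < l →
      MeasurePreserving (fun x : Fin k → ℝ => (x (ed j).1, x (ed j).2)) π μ2 := by
    intro j hj
    have hne : (ed j).1 ≠ (ed j).2 := ne_of_lt (hE _ (hedmem j hj))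
    have h := measurePreserving_pair_eval (k := k) (volume.restrict (Icc (0:ℝ) 1)) hne
    rwa [hμ2eq] at h
  -- the edge factor functions
  set a : ℕ → (Fin k → ℝ) → ℝ := fun j x => u (x (ed j).1, x (ed j).2) with hadef
  set b : ℕ → (Fin k → ℝ) → ℝ := fun j x => w (x (ed j).1, x (ed j).2) with hbdef
  have ha_aesm : ∀ i, i < l → AEStronglyMeasurable (a i) π := fun i hi =>
    hu.1.comp_quasiMeasurePreserving (hT i hi).quasiMeasurePreserving
  have hb_aesm : ∀ i, i < l → AEStronglyMeasurable (b i) π := fun i hi =>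
    hw.1.comp_quasiMeasurePreserving (hT i hi).quasiMeasurePreserving
  have ha_norm : ∀ i, i < l → eLpNorm (a i) (l : ℝ≥0∞) π = eLpNorm u (l : ℝ≥0∞) μ2 :=
    fun i hi => eLpNorm_comp_measurePreserving hu.1 (hT i hi)
  have hb_norm : ∀ i, i < l → eLpNorm (b i) (l : ℝ≥0∞) π = eLpNorm w (l : ℝ≥0∞) μ2 :=
    fun i hi => eLpNorm_comp_measurePreserving hw.1 (hT i hi)
  have hd_norm : ∀ i, i < l → eLpNorm (fun x => a i x - b i x) (l : ℝ≥0∞) π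
      = eLpNorm (fun p => u p - w p) (l : ℝ≥0∞) μ2 := by
    intro i hi
    have h0 : eLpNorm ((fun p : ℝ × ℝ => u p - w p) ∘
        (fun x : Fin k → ℝ => (x (ed i).1, x (ed i).2))) (l : ℝ≥0∞) π
        = eLpNorm (fun p => u p - w p) (l : ℝ≥0∞) μ2 :=
      eLpNorm_comp_measurePreserving hud.1 (hT i hi)
    rw [← h0]; rfl
  -- rewriting the homomorphism densities
  have h1u : homDensity k E u = ∫ x, ∏ j ∈ Finset.range l, a j x ∂π := by
    rw [homDensity]
    congr 1
    funext x
    exact hprod fun e => u (x e.1, x e.2)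
  have h1w : homDensity k E w = ∫ x, ∏ j ∈ Finset.range l, b j x ∂π := by
    rw [homDensity]
    congr 1
    funext x
    exact hprod fun e => w (x e.1, x e.2)
  -- hybrid factors
  set c : ℕ → ℕ → (Fin k → ℝ) → ℝ :=
    fun j i x => if i < j then b i x else if i = j then a i x - b i x else a i x with hcdef
  have hceq : ∀ j i, i < l → eLpNorm (c j i) (l : ℝ≥0∞) π
      = if i < j then eLpNorm w (l : ℝ≥0∞) μ2
        else if i = j then eLpNorm (fun p => u p - w p) (l : ℝ≥0∞) μ2
        else eLpNorm u (l : ℝ≥0∞) μ2 := by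
    intro j i hi
    by_cases h1 : i < j
    · rw [if_pos h1, ← hb_norm i hi]
      congr 1
      funext x
      simp only [hcdef, if_pos h1]
    · by_cases h2 : i = j
      · rw [if_neg h1, if_pos h2, ← hd_norm i hi]
        congr 1
        funext x
        simp only [hcdef, if_neg h1, if_pos h2]
      · rw [if_neg h1, if_neg h2, ← ha_norm i hi]
        congr 1
        funext x
        simp only [hcdef, if_neg h1, if_neg h2]
  have hc_aesm : ∀ j i, i < l → AEStronglyMeasurable (c j i) π := by
    intro j i hi
    by_cases h1 : i < j
    · have : c j i = b i := funext fun x => by simp only [hcdef, if_pos h1]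
      rw [this]; exact hb_aesm i hi
    · by_cases h2 : i = j
      · have : c j i = fun x => a i x - b i x :=
          funext fun x => by simp only [hcdef, if_neg h1, if_pos h2]
        rw [this]; exact (ha_aesm i hi).sub (hb_aesm i hi)
      · have : c j i = a i := funext fun x => by simp only [hcdef, if_neg h1, if_neg h2]
        rw [this]; exact ha_aesm i hi
  have hc_fin : ∀ j i, i < l → eLpNorm (c j i) (l : ℝ≥0∞) π ≠ ⊤ := by
    intro j i hi
    rw [hceq j i hi]
    split_ifs
    · exact hw.2.ne
    · exact hud.2.ne
    · exact hu.2.ne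
  -- integrability of all hybrid products
  have hInt_u : Integrable (fun x => ∏ j ∈ Finset.range l, a j x) π :=
    integrable_prod_of_memLl hl0 (fun j hj => ha_aesm j (Finset.mem_range.mp hj))
      (fun j hj => by rw [ha_norm j (Finset.mem_range.mp hj)]; exact hu.2.ne)
  have hInt_w : Integrable (fun x => ∏ j ∈ Finset.range l, b j x) π :=
    integrable_prod_of_memLl hl0 (fun j hj => hb_aesm j (Finset.mem_range.mp hj))
      (fun j hj => by rw [hb_norm j (Finset.mem_range.mp hj)]; exact hw.2.ne)
  have hInt_c : ∀ j, Integrable (fun x => ∏ i ∈ Finset.range l, c j i x) π := fun j =>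
    integrable_prod_of_memLl hl0 (fun i hi => hc_aesm j i (Finset.mem_range.mp hi))
      (fun i hi => hc_fin j i (Finset.mem_range.mp hi))
  -- telescoping
  have h2 : homDensity k E u - homDensity k E w
      = ∑ j ∈ Finset.range l, ∫ x, ∏ i ∈ Finset.range l, c j i x ∂π := by
    rw [h1u, h1w, ← integral_sub hInt_u hInt_w]
    have hptw : (fun x => (∏ j ∈ Finset.range l, a j x) - ∏ j ∈ Finset.range l, b j x)
        = fun x => ∑ j ∈ Finset.range l, ∏ i ∈ Finset.range l, c j i x :=
      funext fun x => telescope_prod (fun i => a i x) (fun i => b i x) l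
    rw [hptw]
    exact integral_finset_sum _ fun j _ => hInt_c j
  -- the norms appearing in the bound
  set δ : ℝ := (eLpNorm (fun p => u p - w p) (l : ℝ≥0∞) μ2).toReal with hδdef
  set M : ℝ := max (eLpNorm u (l : ℝ≥0∞) μ2).toReal (eLpNorm w (l : ℝ≥0∞) μ2).toReal
    with hMdef
  have hδ0 : 0 ≤ δ := ENNReal.toReal_nonneg
  have hM0 : 0 ≤ M := le_trans ENNReal.toReal_nonneg (le_max_left _ _)
  -- bounding each term
  have hterm : ∀ j ∈ Finset.range l,
      |∫ x, ∏ i ∈ Finset.range l, c j i x ∂π| ≤ δ * M ^ (l - 1) := by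
    intro j hj
    have hj' : j < l := Finset.mem_range.mp hj
    refine (abs_integral_prod_le hl0 (fun i hi => hc_aesm j i (Finset.mem_range.mp hi))
      (fun i hi => hc_fin j i (Finset.mem_range.mp hi))).trans ?_
    rw [← Finset.mul_prod_erase (Finset.range l)
      (fun i => (eLpNorm (c j i) (l : ℝ≥0∞) π).toReal) hj]
    have hjj : (eLpNorm (c j j) (l : ℝ≥0∞) π).toReal = δ := by
      rw [hceq j j hj', if_neg (lt_irrefl j), if_pos rfl, hδdef]
    have hrest : ∏ i ∈ (Finset.range l).erase j, (eLpNorm (c j i) (l : ℝ≥0∞) π).toReal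
        ≤ M ^ (l - 1) := by
      have hcard' : ((Finset.range l).erase j).card = l - 1 := by
        rw [Finset.card_erase_of_mem hj, Finset.card_range]
      calc ∏ i ∈ (Finset.range l).erase j, (eLpNorm (c j i) (l : ℝ≥0∞) π).toReal
          ≤ ∏ _i ∈ (Finset.range l).erase j, M := by
            refine Finset.prod_le_prod (fun i _ => ENNReal.toReal_nonneg) fun i hi => ?_
            have hi' : i < l := Finset.mem_range.mp (Finset.mem_of_mem_erase hi)
            have hij : i ≠ j := Finset.ne_of_mem_erase hi
            rw [hceq j i hi']
            by_cases h1 : i < j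
            · rw [if_pos h1]; exact le_max_right _ _
            · rw [if_neg h1, if_neg hij]; exact le_max_left _ _
        _ = M ^ (l - 1) := by rw [Finset.prod_const, hcard']
    rw [hjj]
    exact mul_le_mul_of_nonneg_left hrest hδ0
  -- putting everything together
  have hfinal : |homDensity k E u - homDensity k E w| ≤ l * (δ * M ^ (l - 1)) := by
    rw [h2]
    refine (Finset.abs_sum_le_sum_abs _ _).trans ?_
    refine (Finset.sum_le_sum hterm).trans ?_
    rw [Finset.sum_const, Finset.card_range, nsmul_eq_mul]
  have hδ' : lpNorm2 (fun p => u p - w p) (l : ℝ) = δ := by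
    rw [lpNorm2, hδdef, ENNReal.ofReal_natCast, hμ2def]
  have hM' : max (lpNorm2 u (l : ℝ)) (lpNorm2 w (l : ℝ)) = M := by
    rw [lpNorm2, lpNorm2, hMdef, ENNReal.ofReal_natCast, hμ2def]
  rw [hδ', hM', mul_assoc]
  exact hfinal
end

section
/- The stepping operator associated to a measurable partition P of [0,1] is contractive with respect to the jumble norm: for every u ∈ ⋂_{p<∞} L^p([0,1]^2), ‖u_P‖_⊞ ≤ ‖u‖_⊞. -/
open MeasureTheory Set Classical

lemma sqrt_le_aux {x s : ℝ} (hx : 0 ≤ x) (hs : 0 < s) :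
    Real.sqrt x ≤ (x / s + s) / 2 := by
  have hsq : Real.sqrt x ^ 2 = x := Real.sq_sqrt hx
  have h1 : 2 * s * Real.sqrt x ≤ x + s ^ 2 := by
    nlinarith [sq_nonneg (Real.sqrt x - s), Real.sqrt_nonneg x]
  have h2 : Real.sqrt x * 2 ≤ x / s + s := by
    rw [← mul_le_mul_iff_of_pos_right hs]
    have he : (x / s + s) * s = x + s ^ 2 := by field_simp
    rw [he]; linarith
  linarith

section OneStep

lemma integ_ite (c r : ℝ) :
    Integrable (fun t => if t ≤ r then c else 0) (volume.restrict (Ioc (0:ℝ) 1)) := by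
  have : (fun t => if t ≤ r then c else 0) = Set.indicator (Iic r) (fun _ => c) := by
    funext t; simp [Set.indicator, Set.mem_Iic]
  rw [this]
  refine Integrable.indicator ?_ measurableSet_Iic
  exact (integrableOn_const_iff).mpr (Or.inr (by simp [Real.volume_Ioc]))

lemma integral_ite (c r : ℝ) (h0 : 0 ≤ r) (h1 : r ≤ 1) :
    ∫ t in Ioc (0:ℝ) 1, (if t ≤ r then c else 0) = r * c := by
  have : (fun t => if t ≤ r then c else 0) = Set.indicator (Iic r) (fun _ => c) := by
    funext t; simp [Set.indicator, Set.mem_Iic]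
  rw [this, setIntegral_indicator measurableSet_Iic]
  have : Ioc (0:ℝ) 1 ∩ Iic r = Ioc 0 r := by
    rw [Set.Ioc_inter_Iic, min_eq_right h1]
  rw [this, setIntegral_const, measureReal_def, Real.volume_Ioc, smul_eq_mul]
  rw [ENNReal.toReal_ofReal (by linarith)]
  ring

lemma onestep {k : ℕ} (lam a d : Fin k → ℝ) {C : ℝ} (hC : 0 ≤ C)
    (hlam : ∀ i, 0 ≤ lam i) (ha0 : ∀ i, 0 ≤ a i) (ha1 : ∀ i, a i ≤ 1)
    (h : ∀ I : Finset (Fin k), |∑ i ∈ I, d i| ≤ C * Real.sqrt (∑ i ∈ I, lam i)) :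
    |∑ i, a i * d i| ≤ C * Real.sqrt (∑ i, a i * lam i) := by
  by_cases hm : ∑ i, a i * lam i = 0
  · have hz : ∀ i ∈ Finset.univ, a i * lam i = 0 := by
      rw [← Finset.sum_eq_zero_iff_of_nonneg
        (fun i _ => mul_nonneg (ha0 i) (hlam i))] ; exact hm
    have : ∀ i ∈ Finset.univ, a i * d i = 0 := by
      intro i _
      rcases mul_eq_zero.mp (hz i (Finset.mem_univ i)) with h' | h'
      · simp [h']
      · have := h {i}
        simp only [Finset.sum_singleton, h', Real.sqrt_zero, mul_zero] at this
        have : d i = 0 := abs_nonpos_iff.mp this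
        simp [this]
    rw [Finset.sum_eq_zero this, hm]
    simp
  · set m := ∑ i, a i * lam i with hmdef
    have hmnn : 0 ≤ m := Finset.sum_nonneg fun i _ => mul_nonneg (ha0 i) (hlam i)
    have hmpos : 0 < m := lt_of_le_of_ne hmnn (Ne.symm hm)
    set s := Real.sqrt m with hsdef
    have hspos : 0 < s := Real.sqrt_pos.mpr hmpos
    set g : ℝ → ℝ := fun t => ∑ i, if t ≤ a i then d i else 0 with hg
    set L : ℝ → ℝ := fun t => ∑ i, if t ≤ a i then lam i else 0 with hL
    have hgint : Integrable g (volume.restrict (Ioc (0:ℝ) 1)) :=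
      integrable_finset_sum _ (fun i _ => integ_ite (d i) (a i))
    have hLint : Integrable L (volume.restrict (Ioc (0:ℝ) 1)) :=
      integrable_finset_sum _ (fun i _ => integ_ite (lam i) (a i))
    have hgI : ∫ t in Ioc (0:ℝ) 1, g t = ∑ i, a i * d i := by
      rw [integral_finset_sum _ (fun i _ => integ_ite (d i) (a i))]
      exact Finset.sum_congr rfl fun i _ => integral_ite (d i) (a i) (ha0 i) (ha1 i)
    have hLI : ∫ t in Ioc (0:ℝ) 1, L t = m := by
      rw [integral_finset_sum _ (fun i _ => integ_ite (lam i) (a i))]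
      exact Finset.sum_congr rfl fun i _ => integral_ite (lam i) (a i) (ha0 i) (ha1 i)
    have hLnn : ∀ t, 0 ≤ L t := fun t =>
      Finset.sum_nonneg fun i _ => by split <;> simp [hlam i]
    have hpt : ∀ t, |g t| ≤ C / (2 * s) * L t + C * s / 2 := by
      intro t
      have h1 : |g t| ≤ C * Real.sqrt (L t) := by
        have e1 : g t = ∑ i ∈ Finset.univ.filter (fun i => t ≤ a i), d i := by
          rw [Finset.sum_filter]
        have e2 : L t = ∑ i ∈ Finset.univ.filter (fun i => t ≤ a i), lam i := by
          rw [Finset.sum_filter]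
        rw [e1, e2]; exact h _
      have h2 : Real.sqrt (L t) ≤ (L t / s + s) / 2 := sqrt_le_aux (hLnn t) hspos
      calc |g t| ≤ C * ((L t / s + s) / 2) :=
            h1.trans (mul_le_mul_of_nonneg_left h2 hC)
        _ = C / (2 * s) * L t + C * s / 2 := by field_simp
    have hrhsint : Integrable (fun t => C / (2 * s) * L t + C * s / 2)
        (volume.restrict (Ioc (0:ℝ) 1)) := by
      refine ((hLint.const_mul _).add ?_)
      exact (integrableOn_const_iff).mpr (Or.inr (by simp [Real.volume_Ioc]))
    have hI : |∫ t in Ioc (0:ℝ) 1, g t| ≤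
        ∫ t in Ioc (0:ℝ) 1, (C / (2 * s) * L t + C * s / 2) := by
      have habs : |∫ t in Ioc (0:ℝ) 1, g t| ≤ ∫ t in Ioc (0:ℝ) 1, |g t| := by
        simpa [Real.norm_eq_abs] using
          norm_integral_le_integral_norm (μ := volume.restrict (Ioc (0:ℝ) 1)) g
      exact habs.trans (integral_mono hgint.abs hrhsint hpt)
    rw [hgI] at hI
    have hRI : ∫ t in Ioc (0:ℝ) 1, (C / (2 * s) * L t + C * s / 2) = C * s := by
      rw [integral_add (hLint.const_mul _)
        ((integrableOn_const_iff).mpr (Or.inr (by simp [Real.volume_Ioc])))]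
      rw [integral_const_mul, hLI, setIntegral_const]
      simp only [measureReal_def, Real.volume_Ioc, smul_eq_mul]
      rw [ENNReal.toReal_ofReal (by norm_num)]
      have hs2 : s ^ 2 = m := Real.sq_sqrt hmnn
      field_simp
      nlinarith [hs2]
    rw [hRI] at hI
    exact hI
end OneStep

lemma corestep {k : ℕ} (lam mu a b : Fin k → ℝ) (c : Fin k → Fin k → ℝ)
    {C : ℝ} (hC : 0 ≤ C)
    (hlam : ∀ i, 0 ≤ lam i) (hmu : ∀ j, 0 ≤ mu j)
    (ha0 : ∀ i, 0 ≤ a i) (ha1 : ∀ i, a i ≤ 1)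
    (hb0 : ∀ j, 0 ≤ b j) (hb1 : ∀ j, b j ≤ 1)
    (h : ∀ I J : Finset (Fin k), |∑ i ∈ I, ∑ j ∈ J, c i j| ≤
      C * (Real.sqrt (∑ i ∈ I, lam i) * Real.sqrt (∑ j ∈ J, mu j))) :
    |∑ i, ∑ j, a i * (b j * c i j)| ≤
      C * (Real.sqrt (∑ i, a i * lam i) * Real.sqrt (∑ j, b j * mu j)) := by
  set d : Fin k → ℝ := fun i => ∑ j, b j * c i j with hd
  have hdI : ∀ I : Finset (Fin k),
      |∑ i ∈ I, d i| ≤ C * Real.sqrt (∑ j, b j * mu j) * Real.sqrt (∑ i ∈ I, lam i) := by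
    intro I
    have hswap : ∑ i ∈ I, d i = ∑ j, b j * ∑ i ∈ I, c i j := by
      rw [Finset.sum_comm]
      exact Finset.sum_congr rfl fun j _ => by rw [Finset.mul_sum]
    rw [hswap]
    have := onestep mu b (fun j => ∑ i ∈ I, c i j)
      (mul_nonneg hC (Real.sqrt_nonneg (∑ i ∈ I, lam i))) hmu hb0 hb1
      (fun J => by
        have := h I J
        rw [Finset.sum_comm] at this
        calc |∑ j ∈ J, ∑ i ∈ I, c i j| ≤
            C * (Real.sqrt (∑ i ∈ I, lam i) * Real.sqrt (∑ j ∈ J, mu j)) := this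
          _ = C * Real.sqrt (∑ i ∈ I, lam i) * Real.sqrt (∑ j ∈ J, mu j) := by ring)
    calc |∑ j, b j * ∑ i ∈ I, c i j| ≤
        C * Real.sqrt (∑ i ∈ I, lam i) * Real.sqrt (∑ j, b j * mu j) := this
      _ = C * Real.sqrt (∑ j, b j * mu j) * Real.sqrt (∑ i ∈ I, lam i) := by ring
  have hfin := onestep lam a d
    (mul_nonneg hC (Real.sqrt_nonneg (∑ j, b j * mu j))) hlam ha0 ha1 hdI
  have : ∑ i, a i * d i = ∑ i, ∑ j, a i * (b j * c i j) := by
    exact Finset.sum_congr rfl fun i _ => by rw [hd, Finset.mul_sum]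
  rw [this] at hfin
  calc |∑ i, ∑ j, a i * (b j * c i j)| ≤
      C * Real.sqrt (∑ j, b j * mu j) * Real.sqrt (∑ i, a i * lam i) := hfin
    _ = C * (Real.sqrt (∑ i, a i * lam i) * Real.sqrt (∑ j, b j * mu j)) := by ring

section Analytic

def sqSet : Set (ℝ × ℝ) := Icc (0:ℝ) 1 ×ˢ Icc (0:ℝ) 1

lemma sqSet_meas : MeasurableSet sqSet :=
  measurableSet_Icc.prod measurableSet_Icc

lemma vol_sqSet : volume sqSet = 1 := by
  unfold sqSet
  rw [Measure.volume_eq_prod, Measure.prod_prod]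
  simp [Real.volume_Icc]

lemma key_bound_s12 (u : ℝ × ℝ → ℝ)
    (hu1 : IntegrableOn u sqSet volume)
    (hu2 : IntegrableOn (fun p => u p ^ 2) sqSet volume)
    {A : Set (ℝ × ℝ)} (hA : MeasurableSet A) (hAsq : A ⊆ sqSet) :
    |∫ p in A, u p| ≤
      Real.sqrt (∫ p in sqSet, u p ^ 2) * Real.sqrt ((volume A).toReal) := by
  have hsqSetfin : volume sqSet ≠ ⊤ := by
    rw [vol_sqSet]; exact ENNReal.one_ne_top
  have hAfin : volume A ≠ ⊤ := fun h =>
    hsqSetfin (top_le_iff.mp (h ▸ measure_mono hAsq))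
  set Q : ℝ := ∫ p in sqSet, u p ^ 2 with hQdef
  have hQnn : 0 ≤ Q := setIntegral_nonneg sqSet_meas (fun p _ => sq_nonneg _)
  set m : ℝ := (volume A).toReal with hmdef
  have hmnn : 0 ≤ m := ENNReal.toReal_nonneg
  by_cases hm : m = 0
  · have hA0 : volume A = 0 := by
      rcases (ENNReal.toReal_eq_zero_iff _).mp hm with h | h
      · exact h
      · exact absurd h hAfin
    rw [Measure.restrict_eq_zero.mpr hA0]
    simp [Real.sqrt_nonneg, mul_nonneg, hQnn]
  · have hmpos : 0 < m := lt_of_le_of_ne hmnn (Ne.symm hm)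
    have huA1 : IntegrableOn u A volume := hu1.mono_set hAsq
    have huA2 : IntegrableOn (fun p => u p ^ 2) A volume := hu2.mono_set hAsq
    have hQA : ∫ p in A, u p ^ 2 ≤ Q := by
      have hr : volume.restrict A = (volume.restrict sqSet).restrict A := by
        rw [Measure.restrict_restrict hA, Set.inter_eq_self_of_subset_left hAsq]
      calc ∫ p in A, u p ^ 2 ∂volume
          = ∫ p in A, u p ^ 2 ∂(volume.restrict sqSet) := by rw [← hr]
        _ ≤ ∫ p, u p ^ 2 ∂(volume.restrict sqSet) :=
            setIntegral_le_integral hu2 (Filter.Eventually.of_forall fun p => sq_nonneg _)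
    by_cases hQ : Q = 0
    · have hae : u =ᵐ[volume.restrict sqSet] 0 := by
        have h2 : (fun p => u p ^ 2) =ᵐ[volume.restrict sqSet] 0 :=
          (integral_eq_zero_iff_of_nonneg (fun p => sq_nonneg _) hu2).mp hQ
        filter_upwards [h2] with p hp
        exact pow_eq_zero_iff (n := 2) (by norm_num) |>.mp hp
      have haeA : u =ᵐ[volume.restrict A] 0 :=
        Filter.EventuallyEq.filter_mono hae
          (ae_mono (Measure.restrict_mono hAsq le_rfl))
      rw [integral_congr_ae haeA]
      simp [Real.sqrt_nonneg, mul_nonneg, Real.sqrt_nonneg]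
    · have hQpos : 0 < Q := lt_of_le_of_ne hQnn (Ne.symm hQ)
      set s : ℝ := Real.sqrt Q / Real.sqrt m with hsdef
      have hspos : 0 < s := div_pos (Real.sqrt_pos.mpr hQpos) (Real.sqrt_pos.mpr hmpos)
      have hpt : ∀ p, |u p| ≤ 1 / (2 * s) * u p ^ 2 + s / 2 := by
        intro p
        have : |u p| = Real.sqrt (u p ^ 2) := (Real.sqrt_sq_eq_abs _).symm
        rw [this]
        calc Real.sqrt (u p ^ 2) ≤ (u p ^ 2 / s + s) / 2 := sqrt_le_aux (sq_nonneg _) hspos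
          _ = 1 / (2 * s) * u p ^ 2 + s / 2 := by field_simp
      have hrhsint : Integrable (fun p => 1 / (2 * s) * u p ^ 2 + s / 2)
          (volume.restrict A) := by
        refine (huA2.const_mul _).add ?_
        exact (integrableOn_const_iff).mpr (Or.inr (lt_of_le_of_ne le_top hAfin))
      have h1 : |∫ p in A, u p| ≤ ∫ p in A, (1 / (2 * s) * u p ^ 2 + s / 2) := by
        have habs : |∫ p in A, u p| ≤ ∫ p in A, |u p| := by
          simpa [Real.norm_eq_abs] using
            norm_integral_le_integral_norm (μ := volume.restrict A) u
        exact habs.trans (integral_mono huA1.abs hrhsint hpt)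
      have h2 : ∫ p in A, (1 / (2 * s) * u p ^ 2 + s / 2) ≤
          1 / (2 * s) * Q + s / 2 * m := by
        rw [integral_add (huA2.const_mul _)
          ((integrableOn_const_iff).mpr (Or.inr (lt_of_le_of_ne le_top hAfin)))]
        rw [integral_const_mul, setIntegral_const, measureReal_def, smul_eq_mul]
        have := mul_le_mul_of_nonneg_left hQA (by positivity : (0:ℝ) ≤ 1 / (2 * s))
        rw [← hmdef]
        linarith [this]
      have h3 : 1 / (2 * s) * Q + s / 2 * m = Real.sqrt Q * Real.sqrt m := by
        have hq : Real.sqrt Q ^ 2 = Q := Real.sq_sqrt hQnn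
        have hm2 : Real.sqrt m ^ 2 = m := Real.sq_sqrt hmnn
        have hqpos : 0 < Real.sqrt Q := Real.sqrt_pos.mpr hQpos
        have hmpos' : 0 < Real.sqrt m := Real.sqrt_pos.mpr hmpos
        rw [hsdef]
        field_simp
        nlinarith [hq, hm2]
      linarith [h1, h2]

end Analytic

/-- The stepping of `u` with respect to the partition `P`: on `P i × P j`, the value is
the average of `u` over `P i × P j`. -/
noncomputable def stepFn (k : ℕ) (P : Fin k → Set ℝ) (u : ℝ × ℝ → ℝ) : ℝ × ℝ → ℝ :=
  fun p => ∑ i : Fin k, ∑ j : Fin k,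
    if p.1 ∈ P i ∧ p.2 ∈ P j then
      (∫ q in P i ×ˢ P j, u q) / ((volume (P i)).toReal * (volume (P j)).toReal)
    else 0

lemma jumble_nonneg_s12 (u : ℝ × ℝ → ℝ) : 0 ≤ jumbleNorm u := by
  refine Real.sSup_nonneg ?_
  rintro r ⟨S, T, _, _, _, _, _, _, rfl⟩
  positivity

lemma jumble_bdd (u : ℝ × ℝ → ℝ)
    (hu1 : IntegrableOn u sqSet volume)
    (hu2 : IntegrableOn (fun p => u p ^ 2) sqSet volume) :
    BddAbove {r : ℝ | ∃ S T : Set ℝ, MeasurableSet S ∧ MeasurableSet T ∧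
      S ⊆ Icc 0 1 ∧ T ⊆ Icc 0 1 ∧ 0 < (volume S).toReal ∧ 0 < (volume T).toReal ∧
      r = |∫ p in S ×ˢ T, u p| / Real.sqrt ((volume S).toReal * (volume T).toReal)} := by
  refine ⟨Real.sqrt (∫ p in sqSet, u p ^ 2), ?_⟩
  rintro r ⟨S, T, hS, hT, hSs, hTs, hSp, hTp, rfl⟩
  have hvol : (volume (S ×ˢ T)).toReal = (volume S).toReal * (volume T).toReal := by
    rw [Measure.volume_eq_prod, Measure.prod_prod, ENNReal.toReal_mul]
  have hkey := key_bound_s12 u hu1 hu2 (hS.prod hT)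
    (Set.prod_mono hSs hTs : S ×ˢ T ⊆ sqSet)
  rw [hvol] at hkey
  rw [div_le_iff₀ (Real.sqrt_pos.mpr (mul_pos hSp hTp))]
  exact hkey

lemma jumble_le (u : ℝ × ℝ → ℝ)
    (hu1 : IntegrableOn u sqSet volume)
    (hu2 : IntegrableOn (fun p => u p ^ 2) sqSet volume)
    {S T : Set ℝ} (hS : MeasurableSet S) (hT : MeasurableSet T)
    (hSs : S ⊆ Icc 0 1) (hTs : T ⊆ Icc 0 1)
    (hSp : 0 < (volume S).toReal) (hTp : 0 < (volume T).toReal) :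
    |∫ p in S ×ˢ T, u p| ≤
      jumbleNorm u * (Real.sqrt (volume S).toReal * Real.sqrt (volume T).toReal) := by
  have hmem : |∫ p in S ×ˢ T, u p| / Real.sqrt ((volume S).toReal * (volume T).toReal) ∈
      {r : ℝ | ∃ S T : Set ℝ, MeasurableSet S ∧ MeasurableSet T ∧
      S ⊆ Icc 0 1 ∧ T ⊆ Icc 0 1 ∧ 0 < (volume S).toReal ∧ 0 < (volume T).toReal ∧
      r = |∫ p in S ×ˢ T, u p| / Real.sqrt ((volume S).toReal * (volume T).toReal)} :=
    ⟨S, T, hS, hT, hSs, hTs, hSp, hTp, rfl⟩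
  have hle : |∫ p in S ×ˢ T, u p| / Real.sqrt ((volume S).toReal * (volume T).toReal) ≤
      jumbleNorm u := by
    rw [jumbleNorm]
    exact le_csSup (jumble_bdd u hu1 hu2) hmem
  rw [div_le_iff₀ (Real.sqrt_pos.mpr (mul_pos hSp hTp))] at hle
  calc |∫ p in S ×ˢ T, u p| ≤
      jumbleNorm u * Real.sqrt ((volume S).toReal * (volume T).toReal) := hle
    _ = jumbleNorm u * (Real.sqrt (volume S).toReal * Real.sqrt (volume T).toReal) := by
      rw [Real.sqrt_mul ENNReal.toReal_nonneg]

/-- The stepping operator is contractive in the jumble norm. -/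
theorem stepping_contractive_jumble (k : ℕ) (P : Fin k → Set ℝ)
    (hmeas : ∀ i, MeasurableSet (P i))
    (hdisj : Pairwise (Function.onFun Disjoint P))
    (hcover : (⋃ i, P i) = Icc 0 1)
    (hpos : ∀ i, 0 < (volume (P i)).toReal)
    (u : ℝ × ℝ → ℝ)
    (hu : ∀ p : ℝ, 1 ≤ p →
      MemLp u (ENNReal.ofReal p) (volume.restrict (Icc 0 1 ×ˢ Icc 0 1))) :
    jumbleNorm (stepFn k P u) ≤ jumbleNorm u := by
  classical
  have hu1 : IntegrableOn u sqSet volume := by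
    have h := hu 1 le_rfl
    rw [ENNReal.ofReal_one] at h
    exact memLp_one_iff_integrable.mp h
  have hu2 : IntegrableOn (fun p => u p ^ 2) sqSet volume := by
    have h := hu 2 one_le_two
    have h2 : (ENNReal.ofReal 2) = 2 := by norm_num
    rw [h2] at h
    exact h.integrable_sq
  have hCnn : 0 ≤ jumbleNorm u := jumble_nonneg_s12 u
  -- partition facts
  have hPsub : ∀ i, P i ⊆ Icc 0 1 := fun i => hcover ▸ subset_iUnion P i
  have hIccfin : volume (Icc (0:ℝ) 1) ≠ ⊤ := by
    rw [Real.volume_Icc]; exact ENNReal.ofReal_ne_top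
  have hPfin : ∀ i, volume (P i) ≠ ⊤ := by
    intro i h
    have h2 : volume (P i) ≤ volume (Icc (0:ℝ) 1) := measure_mono (hPsub i)
    rw [h, top_le_iff] at h2
    exact hIccfin h2
  set lam : Fin k → ℝ := fun i => (volume (P i)).toReal with hlamdef
  have hlamnn : ∀ i, 0 ≤ lam i := fun i => ENNReal.toReal_nonneg
  set c : Fin k → Fin k → ℝ := fun i j => ∫ q in P i ×ˢ P j, u q with hcdef
  -- hypothesis of corestep
  have hIJ : ∀ I J : Finset (Fin k), |∑ i ∈ I, ∑ j ∈ J, c i j| ≤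
      jumbleNorm u * (Real.sqrt (∑ i ∈ I, lam i) * Real.sqrt (∑ j ∈ J, lam j)) := by
    intro I J
    rcases I.eq_empty_or_nonempty with rfl | hI
    · simp
    rcases J.eq_empty_or_nonempty with rfl | hJ
    · simp
    have hbi : ∀ (K : Finset (Fin k)),
        MeasurableSet (⋃ i ∈ K, P i) ∧ (⋃ i ∈ K, P i) ⊆ Icc 0 1 ∧
        (volume (⋃ i ∈ K, P i)).toReal = ∑ i ∈ K, lam i := by
      intro K
      refine ⟨K.measurableSet_biUnion (fun i _ => hmeas i),
        iUnion₂_subset fun i _ => hPsub i, ?_⟩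
      rw [measure_biUnion_finset (fun i _ j _ hij => hdisj hij) (fun i _ => hmeas i)]
      exact ENNReal.toReal_sum (fun i _ => hPfin i)
    obtain ⟨hSIm, hSIs, hSIv⟩ := hbi I
    obtain ⟨hTJm, hTJs, hTJv⟩ := hbi J
    have hSIp : 0 < (volume (⋃ i ∈ I, P i)).toReal := by
      rw [hSIv]; exact Finset.sum_pos (fun i _ => hpos i) hI
    have hTJp : 0 < (volume (⋃ j ∈ J, P j)).toReal := by
      rw [hTJv]; exact Finset.sum_pos (fun j _ => hpos j) hJ
    -- integral additivity
    have hsplit : ∫ p in (⋃ i ∈ I, P i) ×ˢ (⋃ j ∈ J, P j), u p =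
        ∑ i ∈ I, ∑ j ∈ J, c i j := by
      have h1 : (⋃ i ∈ I, P i) ×ˢ (⋃ j ∈ J, P j) =
          ⋃ i ∈ I, (P i ×ˢ (⋃ j ∈ J, P j)) := by
        ext ⟨x, y⟩
        simp only [Set.mem_prod, Set.mem_iUnion]
        tauto
      rw [h1, integral_biUnion_finset I
        (fun i _ => (hmeas i).prod hTJm)
        (fun i _ j _ hij => Set.Disjoint.set_prod_left (hdisj hij) _ _)
        (fun i _ => hu1.mono_set (Set.prod_mono (hPsub i) hTJs))]
      refine Finset.sum_congr rfl fun i _ => ?_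
      rw [Set.prod_iUnion₂, integral_biUnion_finset J
        (fun j _ => (hmeas i).prod (hmeas j))
        (fun j _ j' _ hjj => Set.Disjoint.set_prod_right (hdisj hjj) _ _)
        (fun j _ => hu1.mono_set (Set.prod_mono (hPsub i) (hPsub j)))]
    rw [← hsplit]
    have := jumble_le u hu1 hu2 hSIm hTJm hSIs hTJs hSIp hTJp
    rw [hSIv, hTJv] at this
    exact this
  -- main sSup bound
  rw [jumbleNorm]
  refine Real.sSup_le ?_ hCnn
  rintro r ⟨S, T, hS, hT, hSs, hTs, hSp, hTp, rfl⟩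
  set a : Fin k → ℝ := fun i => (volume (S ∩ P i)).toReal / lam i with hadef
  set b : Fin k → ℝ := fun j => (volume (T ∩ P j)).toReal / lam j with hbdef
  -- facts about the coefficients
  have hfrac : ∀ (X : Set ℝ), MeasurableSet X → X ⊆ Icc 0 1 →
      (∀ i, 0 ≤ (volume (X ∩ P i)).toReal / lam i) ∧
      (∀ i, (volume (X ∩ P i)).toReal / lam i ≤ 1) ∧
      (∑ i, ((volume (X ∩ P i)).toReal / lam i) * lam i = (volume X).toReal) := by
    intro X hXm hXs
    have hfin : ∀ i, volume (X ∩ P i) ≠ ⊤ := by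
      intro i
      exact ne_top_of_le_ne_top (hPfin i) (measure_mono inter_subset_right)
    refine ⟨fun i => div_nonneg ENNReal.toReal_nonneg (hlamnn i), fun i => ?_, ?_⟩
    · rw [div_le_one (hpos i)]
      exact ENNReal.toReal_mono (hPfin i) (measure_mono inter_subset_right)
    · have h1 : ∀ i ∈ Finset.univ, ((volume (X ∩ P i)).toReal / lam i) * lam i =
          (volume (X ∩ P i)).toReal := fun i _ => div_mul_cancel₀ _ (ne_of_gt (hpos i))
      rw [Finset.sum_congr rfl h1]
      have hX : ⋃ i, X ∩ P i = X := by
        rw [← inter_iUnion, hcover, inter_eq_self_of_subset_left hXs]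
      have hvol := measure_iUnion (μ := volume)
        (fun i j hij => ((hdisj hij).mono inter_subset_right inter_subset_right))
        (fun i => hXm.inter (hmeas i))
      rw [hX, tsum_fintype] at hvol
      rw [hvol, ENNReal.toReal_sum (fun i _ => hfin i)]
  obtain ⟨ha0, ha1, hsumS⟩ := hfrac S hS hSs
  obtain ⟨hb0, hb1, hsumT⟩ := hfrac T hT hTs
  -- integral of each step term
  have hSTfin : volume (S ×ˢ T) < ⊤ := by
    rw [Measure.volume_eq_prod, Measure.prod_prod]
    exact ENNReal.mul_lt_top
      (lt_of_le_of_lt (measure_mono hSs) (lt_top_iff_ne_top.mpr hIccfin))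
      (lt_of_le_of_lt (measure_mono hTs) (lt_top_iff_ne_top.mpr hIccfin))
  have heqind : ∀ (i j : Fin k) (d : ℝ),
      (fun p : ℝ × ℝ => if p.1 ∈ P i ∧ p.2 ∈ P j then d else 0) =
      Set.indicator (P i ×ˢ P j) (fun _ => d) := by
    intro i j d
    funext p
    simp [Set.indicator, Set.mem_prod]
  have hterm_int : ∀ (i j : Fin k) (d : ℝ),
      IntegrableOn (fun p : ℝ × ℝ => if p.1 ∈ P i ∧ p.2 ∈ P j then d else 0)
        (S ×ˢ T) volume := by
    intro i j d
    rw [heqind]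
    exact ((integrableOn_const_iff).mpr (Or.inr hSTfin)).indicator ((hmeas i).prod (hmeas j))
  have hterm : ∀ (i j : Fin k) (d : ℝ),
      ∫ p in S ×ˢ T, (if p.1 ∈ P i ∧ p.2 ∈ P j then d else 0) =
      (volume (S ∩ P i)).toReal * (volume (T ∩ P j)).toReal * d := by
    intro i j d
    rw [heqind, setIntegral_indicator ((hmeas i).prod (hmeas j)), setIntegral_const,
      smul_eq_mul, measureReal_def, Set.prod_inter_prod, Measure.volume_eq_prod, Measure.prod_prod,
      ENNReal.toReal_mul]
  -- evaluate the integral of the step function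
  have hstep : ∫ p in S ×ˢ T, stepFn k P u p = ∑ i, ∑ j, a i * (b j * c i j) := by
    have h1 : ∫ p in S ×ˢ T, stepFn k P u p =
        ∑ i, ∑ j, ∫ p in S ×ˢ T,
          (if p.1 ∈ P i ∧ p.2 ∈ P j then c i j / (lam i * lam j) else 0) := by
      simp only [stepFn]
      rw [integral_finset_sum _
        (fun i _ => integrable_finset_sum _ (fun j _ => hterm_int i j _))]
      refine Finset.sum_congr rfl fun i _ => ?_
      rw [integral_finset_sum _ (fun j _ => hterm_int i j _)]
    rw [h1]
    refine Finset.sum_congr rfl fun i _ => Finset.sum_congr rfl fun j _ => ?_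
    rw [hterm i j]
    simp only [hadef, hbdef]
    ring
  -- apply the core inequality
  have hcore := corestep lam lam a b c hCnn hlamnn hlamnn ha0 ha1 hb0 hb1 hIJ
  rw [hsumS, hsumT] at hcore
  rw [hstep, div_le_iff₀ (Real.sqrt_pos.mpr (mul_pos hSp hTp)),
    Real.sqrt_mul ENNReal.toReal_nonneg]
  exact hcore
end

section
/- A family M of probability distributions on ℕ is moment-bounded (for every p ≥ 1 there is c_p with Σ_m μ(m) m^p < c_p for all μ ∈ M) if and only if there exists a weight function ρ : ℕ → (0,∞) with Σ_m ρ(m) m^p < ∞ for every p ≥ 0, such that for every p ≥ 1 there is c'_p with Σ_m μ(m) / ρ(m)^p < c'_p for all μ ∈ M. -/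
set_option maxHeartbeats 1000000 in
/-- A family `M` of probability distributions on `ℕ` is moment-bounded if and only if
there exists a weight function `ρ` (strictly positive, with all weighted power sums
`Σ ρ(m) m^p` finite) such that `M` is `ρ`-smooth. -/
theorem moment_bounded_iff_smooth (M : Set (ℕ → ℝ))
    (hM : ∀ μ ∈ M, (∀ m, 0 ≤ μ m) ∧ Summable μ ∧ ∑' m, μ m = 1) :
    (∀ p : ℕ, 1 ≤ p → ∃ c : ℝ, ∀ μ ∈ M,
        Summable (fun m : ℕ => μ m * (m : ℝ) ^ p) ∧ ∑' m : ℕ, μ m * (m : ℝ) ^ p < c) ↔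
      (∃ ρ : ℕ → ℝ, (∀ m, 0 < ρ m) ∧
        (∀ p : ℕ, Summable (fun m : ℕ => ρ m * (m : ℝ) ^ p)) ∧
        (∀ p : ℕ, 1 ≤ p → ∃ c' : ℝ, ∀ μ ∈ M,
          Summable (fun m : ℕ => μ m / ρ m ^ p) ∧ ∑' m : ℕ, μ m / ρ m ^ p < c')) := by
  have hσ : Summable (fun m : ℕ => 1 / ((m : ℝ) + 1) ^ 2) := by
    have h1 : Summable (fun n : ℕ => 1 / (n : ℝ) ^ 2) :=
      Real.summable_one_div_nat_pow.mpr one_lt_two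
    have := (summable_nat_add_iff 1).mpr h1
    simpa using this
  have hσ0 : ∀ m : ℕ, (0 : ℝ) < ((m : ℝ) + 1) ^ 2 := fun m => by positivity
  constructor
  · -- forward: construct ρ
    intro h
    -- a uniform moment-bound function D
    have hDex : ∃ D : ℕ → ℝ, ∀ j, 1 ≤ D j ∧ (1 ≤ j → ∀ μ ∈ M,
        Summable (fun m : ℕ => μ m * (m : ℝ) ^ j) ∧ ∑' m : ℕ, μ m * (m : ℝ) ^ j ≤ D j) := by
      choose c hc using h
      refine ⟨fun j => if hj : 1 ≤ j then max (c j hj) 1 else 1, fun j => ?_⟩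
      by_cases hj : 1 ≤ j
      · simp only [dif_pos hj]
        exact ⟨le_max_right _ _, fun _ μ hμ => ⟨(hc j hj μ hμ).1,
          ((hc j hj μ hμ).2).le.trans (le_max_left _ _)⟩⟩
      · simp only [dif_neg hj]
        exact ⟨le_rfl, fun h' => absurd h' hj⟩
    obtain ⟨D, hD⟩ := hDex
    -- termwise moment bound
    have hterm : ∀ j, 1 ≤ j → ∀ μ ∈ M, ∀ m : ℕ, μ m * (m : ℝ) ^ j ≤ D j := by
      intro j hj μ hμ m
      obtain ⟨h1, h2⟩ := (hD j).2 hj μ hμ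
      refine (Summable.le_tsum h1 m (fun i _ => ?_)).trans h2
      exact mul_nonneg ((hM μ hμ).1 i) (by positivity)
    -- a cumulative bound C
    obtain ⟨C, hC1, hCj⟩ : ∃ C : ℕ → ℝ, (∀ k, 1 ≤ C k) ∧
        ∀ k j, j < k * k + k + 3 → D j ≤ C k := by
      refine ⟨fun k => ∑ j ∈ Finset.range (k * k + k + 3), D j, fun k => ?_, fun k j hj => ?_⟩
      · have h0 : (0 : ℕ) ∈ Finset.range (k * k + k + 3) := by simp
        calc (1 : ℝ) ≤ D 0 := (hD 0).1
          _ ≤ _ := Finset.single_le_sum (fun j _ => (zero_le_one.trans (hD j).1)) h0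
      · exact Finset.single_le_sum (fun i _ => (zero_le_one.trans (hD i).1))
          (Finset.mem_range.mpr hj)
    -- the thresholds N
    obtain ⟨N, hN0, hNk⟩ : ∃ N : ℕ → ℕ, N 0 = 0 ∧
        ∀ k, 1 ≤ k → (2 : ℝ) ^ (k * k + k + 2) * C k ≤ (N k : ℝ) ^ k := by
      refine ⟨fun k => if k = 0 then 0 else 8 * 2 ^ k * ⌈C k⌉₊, rfl, fun k hk => ?_⟩
      have hk0 : k ≠ 0 := by omega
      have hceil : C k ≤ (⌈C k⌉₊ : ℝ) := Nat.le_ceil _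
      have hCk0 : (0 : ℝ) ≤ C k := zero_le_one.trans (hC1 k)
      have hNcast : (8 : ℝ) * 2 ^ k * C k
          ≤ ((if k = 0 then 0 else 8 * 2 ^ k * ⌈C k⌉₊ : ℕ) : ℝ) := by
        rw [if_neg hk0]
        push_cast
        have h2k : (0 : ℝ) < 8 * 2 ^ k := by positivity
        nlinarith
      have hpos : (0 : ℝ) ≤ 8 * 2 ^ k * C k := by positivity
      calc (2 : ℝ) ^ (k * k + k + 2) * C k
          ≤ (2 : ℝ) ^ (k * k + 3 * k) * C k := by
            have hle : k * k + k + 2 ≤ k * k + 3 * k := by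
              have : 1 * 1 ≤ k * k := Nat.mul_le_mul hk hk
              omega
            have h2 : (2 : ℝ) ^ (k * k + k + 2) ≤ (2 : ℝ) ^ (k * k + 3 * k) :=
              pow_le_pow_right₀ one_le_two hle
            nlinarith
        _ ≤ ((8 : ℝ) * 2 ^ k * C k) ^ k := by
            have hCk : C k ≤ (C k) ^ k := le_self_pow₀ (hC1 k) hk0
            have hh : ((8 : ℝ) * 2 ^ k * C k) ^ k = 8 ^ k * (2 ^ k) ^ k * (C k) ^ k := by
              rw [mul_pow, mul_pow]
            rw [hh, ← pow_mul]
            have h8 : (8 : ℝ) ^ k = 2 ^ (3 * k) := by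
              rw [pow_mul]; norm_num
            rw [h8, ← pow_add]
            have hx : (0 : ℝ) ≤ (2 : ℝ) ^ (3 * k + k * k) := by positivity
            have hee : (2 : ℝ) ^ (k * k + 3 * k) = 2 ^ (3 * k + k * k) := by ring_nf
            rw [hee]
            nlinarith
        _ ≤ _ := pow_le_pow_left₀ hpos hNcast k
    -- the block index a
    obtain ⟨a, haN, hale, hage⟩ : ∃ a : ℕ → ℕ, (∀ m, N (a m) ≤ m) ∧ (∀ m, a m ≤ m) ∧
        (∀ m k, N k ≤ m → k ≤ m → k ≤ a m) := by
      have hane : ∀ m : ℕ, ((Finset.range (m + 1)).filter (fun k => N k ≤ m)).Nonempty := by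
        intro m
        exact ⟨0, Finset.mem_filter.mpr ⟨Finset.mem_range.mpr (by omega), by simp [hN0]⟩⟩
      refine ⟨fun m => ((Finset.range (m + 1)).filter (fun k => N k ≤ m)).max' (hane m),
        fun m => ?_, fun m => ?_, fun m k h1 h2 => ?_⟩
      · exact (Finset.mem_filter.mp (Finset.max'_mem _ (hane m))).2
      · exact Nat.lt_succ_iff.mp
          (Finset.mem_range.mp (Finset.mem_filter.mp (Finset.max'_mem _ (hane m))).1)
      · refine Finset.le_max' ((Finset.range (m + 1)).filter (fun i => N i ≤ m)) k ?_
        exact Finset.mem_filter.mpr ⟨Finset.mem_range.mpr (Nat.lt_succ_of_le h2), h1⟩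
    refine ⟨fun m => (((m : ℝ) + 1) ^ a m)⁻¹, fun m => by positivity, ?_, ?_⟩
    · -- weighted power sums finite
      intro q
      set T : ℕ := max (N (q + 3)) (q + 3) with hT
      set K : ℝ := (T : ℝ) ^ q * ((T : ℝ) + 1) ^ 2 + 1 with hK
      have hK1 : (1 : ℝ) ≤ K := by
        have : (0 : ℝ) ≤ (T : ℝ) ^ q * ((T : ℝ) + 1) ^ 2 := by positivity
        linarith
      have key : ∀ m : ℕ, (((m : ℝ) + 1) ^ a m)⁻¹ * (m : ℝ) ^ q ≤ K / ((m : ℝ) + 1) ^ 2 := by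
        intro m
        have hm0 : (0 : ℝ) ≤ (m : ℝ) := Nat.cast_nonneg m
        have hb1 : (1 : ℝ) ≤ (m : ℝ) + 1 := by linarith
        have hbpos : (0 : ℝ) < ((m : ℝ) + 1) ^ a m := by positivity
        rw [le_div_iff₀ (hσ0 m)]
        rcases le_or_gt T m with hm | hm
        · -- main regime : a m ≥ q+3
          have haq : q + 3 ≤ a m :=
            hage m (q + 3) ((le_max_left _ _).trans hm) ((le_max_right _ _).trans hm)
          have h1 : (m : ℝ) ^ q * ((m : ℝ) + 1) ^ 2 ≤ ((m : ℝ) + 1) ^ a m := by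
            calc (m : ℝ) ^ q * ((m : ℝ) + 1) ^ 2
                ≤ ((m : ℝ) + 1) ^ q * ((m : ℝ) + 1) ^ 2 :=
                  mul_le_mul_of_nonneg_right
                    (pow_le_pow_left₀ hm0 (by linarith) q) (by positivity)
              _ = ((m : ℝ) + 1) ^ (q + 2) := by rw [← pow_add]
              _ ≤ ((m : ℝ) + 1) ^ a m := pow_le_pow_right₀ hb1 (by omega)
          calc (((m : ℝ) + 1) ^ a m)⁻¹ * (m : ℝ) ^ q * ((m : ℝ) + 1) ^ 2
              = ((m : ℝ) ^ q * ((m : ℝ) + 1) ^ 2) / ((m : ℝ) + 1) ^ a m := by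
                rw [div_eq_mul_inv]; ring
            _ ≤ 1 := by rw [div_le_one hbpos]; exact h1
            _ ≤ K := hK1
        · -- head
          have hmT : (m : ℝ) ≤ (T : ℝ) := by exact_mod_cast hm.le
          have hinv : (((m : ℝ) + 1) ^ a m)⁻¹ ≤ 1 := by
            rw [inv_le_one_iff₀]
            right
            exact one_le_pow₀ hb1
          calc (((m : ℝ) + 1) ^ a m)⁻¹ * (m : ℝ) ^ q * ((m : ℝ) + 1) ^ 2
              ≤ 1 * ((m : ℝ) ^ q * ((m : ℝ) + 1) ^ 2) := by
                rw [mul_assoc]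
                exact mul_le_mul_of_nonneg_right hinv (by positivity)
              _ = (m : ℝ) ^ q * ((m : ℝ) + 1) ^ 2 := one_mul _
              _ ≤ (T : ℝ) ^ q * ((T : ℝ) + 1) ^ 2 :=
                  mul_le_mul (pow_le_pow_left₀ hm0 hmT q)
                    (pow_le_pow_left₀ (by positivity) (by linarith) 2)
                    (by positivity) (by positivity)
              _ ≤ K := by rw [hK]; linarith
      have hcmp : Summable (fun m : ℕ => K / ((m : ℝ) + 1) ^ 2) := by
        have := hσ.mul_left K
        simpa [mul_one_div, div_eq_mul_inv] using this
      exact Summable.of_nonneg_of_le (fun m => by positivity) key hcmp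
    · -- smoothness
      intro p hp
      have hrw : ∀ (μ : ℕ → ℝ) (m : ℕ),
          μ m / ((((m : ℝ) + 1) ^ a m)⁻¹) ^ p = μ m * ((m : ℝ) + 1) ^ (a m * p) := by
        intro μ m
        rw [div_eq_mul_inv, inv_pow, inv_inv, ← pow_mul]
      set T : ℕ := max (N p) p with hT
      set K : ℝ := ((T : ℝ) + 1) ^ (T * p + 2) + 4 with hK
      have hK4 : (4 : ℝ) ≤ K := by
        have : (0 : ℝ) ≤ ((T : ℝ) + 1) ^ (T * p + 2) := by positivity
        linarith
      refine ⟨K * (∑' m : ℕ, 1 / ((m : ℝ) + 1) ^ 2) + 1, ?_⟩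
      intro μ hμ
      obtain ⟨hμ0, hμs, hμ1⟩ := hM μ hμ
      have hμle : ∀ i, μ i ≤ 1 := fun i =>
        (Summable.le_tsum hμs i fun j _ => hμ0 j).trans_eq hμ1
      have key : ∀ m : ℕ, μ m * ((m : ℝ) + 1) ^ (a m * p) ≤ K / ((m : ℝ) + 1) ^ 2 := by
        intro m
        have hm0 : (0 : ℝ) ≤ (m : ℝ) := Nat.cast_nonneg m
        have hb1 : (1 : ℝ) ≤ (m : ℝ) + 1 := by linarith
        rw [le_div_iff₀ (hσ0 m)]
        rcases le_or_gt T m with hm | hm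
        · -- main regime
          have hk1 : p ≤ a m := hage m p ((le_max_left _ _).trans hm)
            ((le_max_right _ _).trans hm)
          have hm1 : 1 ≤ m := le_trans (hp.trans ((le_max_right _ _ : p ≤ T))) hm
          have hkpos : 1 ≤ a m := hp.trans hk1
          have hNm : N (a m) ≤ m := haN m
          obtain ⟨k, hkdef⟩ : ∃ k, k = a m := ⟨a m, rfl⟩
          rw [← hkdef] at hk1 hkpos hNm ⊢
          obtain ⟨j, hjdef⟩ : ∃ j, j = k * p + k + 2 := ⟨_, rfl⟩
          have hmul : k * p ≤ k * k := Nat.mul_le_mul_left k hk1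
          have hj1 : 1 ≤ j := by rw [hjdef]; omega
          have hjlt : j < k * k + k + 3 := by rw [hjdef]; linarith
          have hje : j ≤ k * k + k + 2 := by rw [hjdef]; linarith
          have h2m : ((m : ℝ) + 1) ≤ 2 * (m : ℝ) := by
            have : (1 : ℝ) ≤ (m : ℝ) := by exact_mod_cast hm1
            linarith
          have hA : μ m * ((m : ℝ) + 1) ^ j ≤ 2 ^ j * C k := by
            calc μ m * ((m : ℝ) + 1) ^ j ≤ μ m * (2 * (m : ℝ)) ^ j :=
                  mul_le_mul_of_nonneg_left
                    (pow_le_pow_left₀ (by positivity) h2m j) (hμ0 m)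
              _ = 2 ^ j * (μ m * (m : ℝ) ^ j) := by rw [mul_pow]; ring
              _ ≤ 2 ^ j * D j :=
                  mul_le_mul_of_nonneg_left (hterm j hj1 μ hμ m) (by positivity)
              _ ≤ 2 ^ j * C k :=
                  mul_le_mul_of_nonneg_left (hCj k j hjlt) (by positivity)
          have hB : (2 : ℝ) ^ j * C k ≤ ((m : ℝ) + 1) ^ k := by
            have h1 : (2 : ℝ) ^ j * C k ≤ 2 ^ (k * k + k + 2) * C k := by
              have h2 : (2 : ℝ) ^ j ≤ 2 ^ (k * k + k + 2) := pow_le_pow_right₀ one_le_two hje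
              have hCk0 : (0 : ℝ) ≤ C k := zero_le_one.trans (hC1 k)
              nlinarith
            have h2 := hNk k hkpos
            have h3 : ((N k : ℝ)) ^ k ≤ ((m : ℝ) + 1) ^ k := by
              have hNm' : (N k : ℝ) ≤ (m : ℝ) := by exact_mod_cast hNm
              exact pow_le_pow_left₀ (by positivity) (by linarith) k
            linarith
          have hpowe : k * p + 2 + k = j := by rw [hjdef]; omega
          have hmk : (0 : ℝ) < ((m : ℝ) + 1) ^ k := by positivity
          have hmain : μ m * ((m : ℝ) + 1) ^ (k * p) * ((m : ℝ) + 1) ^ 2 ≤ 1 := by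
            rw [← mul_le_mul_iff_of_pos_right hmk]
            calc μ m * ((m : ℝ) + 1) ^ (k * p) * ((m : ℝ) + 1) ^ 2 * ((m : ℝ) + 1) ^ k
                = μ m * ((m : ℝ) + 1) ^ j := by
                  rw [← hpowe, pow_add, pow_add]; ring
              _ ≤ 2 ^ j * C k := hA
              _ ≤ ((m : ℝ) + 1) ^ k := hB
              _ = 1 * ((m : ℝ) + 1) ^ k := (one_mul _).symm
          linarith
        · -- head
          have hmT : m ≤ T := hm.le
          have hmTc : (m : ℝ) + 1 ≤ (T : ℝ) + 1 := by
            have : (m : ℝ) ≤ (T : ℝ) := by exact_mod_cast hmT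
            linarith
          have hexp : a m * p ≤ T * p := Nat.mul_le_mul_right p ((hale m).trans hmT)
          calc μ m * ((m : ℝ) + 1) ^ (a m * p) * ((m : ℝ) + 1) ^ 2
              ≤ 1 * (((T : ℝ) + 1) ^ (a m * p) * ((T : ℝ) + 1) ^ 2) := by
                rw [mul_assoc]
                exact mul_le_mul (hμle m)
                  (mul_le_mul (pow_le_pow_left₀ (by positivity) hmTc _)
                    (pow_le_pow_left₀ (by positivity) hmTc 2)
                    (by positivity) (by positivity))
                  (by positivity) zero_le_one
            _ = ((T : ℝ) + 1) ^ (a m * p) * ((T : ℝ) + 1) ^ 2 := one_mul _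
            _ ≤ ((T : ℝ) + 1) ^ (T * p) * ((T : ℝ) + 1) ^ 2 :=
                mul_le_mul_of_nonneg_right
                  (pow_le_pow_right₀ (by linarith) hexp) (by positivity)
            _ = ((T : ℝ) + 1) ^ (T * p + 2) := by rw [← pow_add]
            _ ≤ K := by rw [hK]; linarith
      have hle : ∀ m : ℕ, μ m / ((((m : ℝ) + 1) ^ a m)⁻¹) ^ p
          ≤ K * (1 / ((m : ℝ) + 1) ^ 2) := by
        intro m
        rw [hrw μ m, mul_one_div]
        exact key m
      have hnon : ∀ m : ℕ, 0 ≤ μ m / ((((m : ℝ) + 1) ^ a m)⁻¹) ^ p := by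
        intro m
        apply div_nonneg (hμ0 m)
        positivity
      have hcmp : Summable (fun m : ℕ => K * (1 / ((m : ℝ) + 1) ^ 2)) := hσ.mul_left K
      have hs : Summable (fun m : ℕ => μ m / ((((m : ℝ) + 1) ^ a m)⁻¹) ^ p) :=
        Summable.of_nonneg_of_le hnon hle hcmp
      refine ⟨hs, ?_⟩
      calc ∑' m : ℕ, μ m / ((((m : ℝ) + 1) ^ a m)⁻¹) ^ p
          ≤ ∑' m : ℕ, K * (1 / ((m : ℝ) + 1) ^ 2) := Summable.tsum_le_tsum hle hs hcmp
        _ = K * (∑' m : ℕ, 1 / ((m : ℝ) + 1) ^ 2) := tsum_mul_left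
        _ < K * (∑' m : ℕ, 1 / ((m : ℝ) + 1) ^ 2) + 1 := by linarith
  · -- reverse
    rintro ⟨ρ, hρpos, hρsum, hsm⟩ p hp
    have hρ0 : Summable ρ := by simpa using hρsum 0
    have hBle : ∀ m, ρ m ≤ ∑' i, ρ i := fun m =>
      Summable.le_tsum hρ0 m (fun j _ => (hρpos j).le)
    set B : ℝ := ∑' i, ρ i with hBdef
    have hB0 : 0 < B := (hρpos 0).trans_le (hBle 0)
    obtain ⟨c', hc'⟩ := hsm p hp
    refine ⟨B ^ (p - 1) * (∑' m : ℕ, ρ m * (m : ℝ) ^ (2 * p)) + c', ?_⟩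
    intro μ hμ
    obtain ⟨hμ0, hμs, hμ1⟩ := hM μ hμ
    have hμle : ∀ i, μ i ≤ 1 := fun i =>
      (Summable.le_tsum hμs i fun j _ => hμ0 j).trans_eq hμ1
    obtain ⟨hs1, hs2⟩ := hc' μ hμ
    have hgs : Summable (fun m : ℕ =>
        B ^ (p - 1) * (ρ m * (m : ℝ) ^ (2 * p)) + μ m / ρ m ^ p) :=
      ((hρsum (2 * p)).mul_left _).add hs1
    have hle : ∀ m : ℕ, μ m * (m : ℝ) ^ p
        ≤ B ^ (p - 1) * (ρ m * (m : ℝ) ^ (2 * p)) + μ m / ρ m ^ p := by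
      intro m
      have hρm := hρpos m
      have hρp : (0 : ℝ) < ρ m ^ p := pow_pos hρm p
      have hdiv0 : 0 ≤ μ m / ρ m ^ p := div_nonneg (hμ0 m) hρp.le
      have hmn : (0 : ℝ) ≤ (m : ℝ) ^ p := by positivity
      rcases le_or_gt 1 (ρ m ^ p * (m : ℝ) ^ p) with hcase | hcase
      · have h2p : (m : ℝ) ^ (2 * p) = (m : ℝ) ^ p * (m : ℝ) ^ p := by
          rw [two_mul, pow_add]
        have h1 : (m : ℝ) ^ p ≤ ρ m ^ p * (m : ℝ) ^ (2 * p) := by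
          rw [h2p, ← mul_assoc]
          nlinarith
        have h2 : ρ m ^ p ≤ B ^ (p - 1) * ρ m := by
          have hpe : ρ m ^ p = ρ m ^ (p - 1) * ρ m := by
            rw [← pow_succ]
            congr 1
            omega
          rw [hpe]
          exact mul_le_mul_of_nonneg_right
            (pow_le_pow_left₀ hρm.le (hBle m) _) hρm.le
        have h3 : μ m * (m : ℝ) ^ p ≤ ρ m ^ p * (m : ℝ) ^ (2 * p) := by
          calc μ m * (m : ℝ) ^ p ≤ 1 * (m : ℝ) ^ p :=
                mul_le_mul_of_nonneg_right (hμle m) hmn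
            _ = (m : ℝ) ^ p := one_mul _
            _ ≤ ρ m ^ p * (m : ℝ) ^ (2 * p) := h1
        have h4 : ρ m ^ p * (m : ℝ) ^ (2 * p) ≤ B ^ (p - 1) * (ρ m * (m : ℝ) ^ (2 * p)) := by
          have hm2p : (0 : ℝ) ≤ (m : ℝ) ^ (2 * p) := by positivity
          calc ρ m ^ p * (m : ℝ) ^ (2 * p) ≤ (B ^ (p - 1) * ρ m) * (m : ℝ) ^ (2 * p) :=
                mul_le_mul_of_nonneg_right h2 hm2p
            _ = B ^ (p - 1) * (ρ m * (m : ℝ) ^ (2 * p)) := by ring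
        linarith
      · have h1 : (m : ℝ) ^ p ≤ 1 / ρ m ^ p := by
          rw [le_div_iff₀ hρp]
          nlinarith
        have h2 : μ m * (m : ℝ) ^ p ≤ μ m / ρ m ^ p := by
          calc μ m * (m : ℝ) ^ p ≤ μ m * (1 / ρ m ^ p) :=
                mul_le_mul_of_nonneg_left h1 (hμ0 m)
            _ = μ m / ρ m ^ p := by rw [mul_one_div]
        have h3 : (0 : ℝ) ≤ B ^ (p - 1) * (ρ m * (m : ℝ) ^ (2 * p)) := by positivity
        linarith
    have hnon : ∀ m : ℕ, 0 ≤ μ m * (m : ℝ) ^ p := fun m =>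
      mul_nonneg (hμ0 m) (by positivity)
    have hsum : Summable (fun m : ℕ => μ m * (m : ℝ) ^ p) :=
      Summable.of_nonneg_of_le hnon hle hgs
    refine ⟨hsum, ?_⟩
    calc ∑' m : ℕ, μ m * (m : ℝ) ^ p
        ≤ ∑' m : ℕ, (B ^ (p - 1) * (ρ m * (m : ℝ) ^ (2 * p)) + μ m / ρ m ^ p) :=
          Summable.tsum_le_tsum hle hsum hgs
      _ = B ^ (p - 1) * (∑' m : ℕ, ρ m * (m : ℝ) ^ (2 * p)) + ∑' m : ℕ, μ m / ρ m ^ p := by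
          rw [Summable.tsum_add ((hρsum (2 * p)).mul_left _) hs1, tsum_mul_left]
      _ < B ^ (p - 1) * (∑' m : ℕ, ρ m * (m : ℝ) ^ (2 * p)) + c' := by linarith
end
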